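/- arXiv:1503.04301 — 8 statements merged into one kernel-verified Lean document; each statement's English description precedes it below -/
import Mathlib

section
/- Let G be a finite group with abelian commutator subgroup G'. If the quotient G/(G'Z(G)) is cyclic, generated by aG'Z(G), then the map g ↦ [g,a] is a surjective homomorphism from G'Z(G) onto G' with kernel Z(G). -/
variable (G : Type*) [Group G]

/-- The subgroup of inner automorphisms of `G`. -/
def innAut : Subgroup (MulAut G) := (MulAut.conj (G := G)).range

/-- Central automorphisms: those commuting with every inner automorphism. -/
def Autcent : Subgroup (MulAut G) :=
  Subgroup.centralizer (innAut G : Set (MulAut G))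

/-- Automorphisms fixing the center elementwise. -/
def fixCenter : Subgroup (MulAut G) where
  carrier := {α | ∀ z ∈ Subgroup.center G, α z = z}
  one_mem' := fun _ _ => rfl
  mul_mem' := by
    intro a b ha hb z hz
    show a (b z) = z
    rw [hb z hz, ha z hz]
  inv_mem' := by
    intro a ha z hz
    show a⁻¹ z = z
    have h := ha z hz
    have : a.symm (a z) = a.symm z := by rw [h]
    simpa using this.symm

/-- Central automorphisms fixing the center elementwise. -/
def AutcentZ : Subgroup (MulAut G) := Autcent G ⊓ fixCenter G

/-- The center of the inner automorphism group, as a subgroup of `MulAut G`. -/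
def ZInn : Subgroup (MulAut G) :=
  innAut G ⊓ Subgroup.centralizer (innAut G : Set (MulAut G))

open scoped commutatorElement

private lemma comm_mul_aux {G : Type*} [Group G] (g₁ g₂ h : G) :
    ⁅g₁ * g₂, h⁆ = g₁ * ⁅g₂, h⁆ * g₁⁻¹ * ⁅g₁, h⁆ := by group

private lemma comm_inv_aux {G : Type*} [Group G] (g h : G) :
    ⁅g⁻¹, h⁆ = g⁻¹ * ⁅g, h⁆⁻¹ * g := by group

private lemma comm_mul_right_aux {G : Type*} [Group G] (g h₁ h₂ : G) :
    ⁅g, h₁ * h₂⁆ = ⁅g, h₁⁆ * (h₁ * ⁅g, h₂⁆ * h₁⁻¹) := by group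

private lemma comm_inv_right_aux {G : Type*} [Group G] (g h : G) :
    ⁅g, h⁻¹⁆ = h⁻¹ * ⁅g, h⁆⁻¹ * h := by group

private lemma comm_one_aux {G : Type*} [Group G] (h : G) : ⁅(1 : G), h⁆ = 1 := by group

/-- If generators pairwise commute mod a normal subgroup `D`, then `G' ≤ D`. -/
lemma myaux {G : Type*} [Group G] (D : Subgroup G) (hD : D.Normal) (S : Set G)
    (hS : Subgroup.closure S = ⊤) (h : ∀ s ∈ S, ∀ t ∈ S, ⁅s, t⁆ ∈ D) :
    commutator G ≤ D := by
  have hstep : ∀ s : G, (∀ t ∈ S, ⁅s, t⁆ ∈ D) → ∀ x : G, ⁅s, x⁆ ∈ D := by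
    intro s hs x
    let C : Subgroup G :=
      { carrier := {x | ⁅s, x⁆ ∈ D}
        one_mem' := by
          show ⁅s, (1 : G)⁆ ∈ D
          have : ⁅s, (1 : G)⁆ = 1 := by group
          rw [this]; exact one_mem D
        mul_mem' := by
          intro x y hx hy
          show ⁅s, x * y⁆ ∈ D
          rw [comm_mul_right_aux]
          exact mul_mem hx (hD.conj_mem _ hy x)
        inv_mem' := by
          intro x hx
          show ⁅s, x⁻¹⁆ ∈ D
          rw [comm_inv_right_aux]
          have : x⁻¹ * ⁅s, x⁆⁻¹ * x = x⁻¹ * ⁅s, x⁆⁻¹ * x⁻¹⁻¹ := by group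
          rw [this]
          exact hD.conj_mem _ (inv_mem hx) x⁻¹ }
    have hC : (⊤ : Subgroup G) ≤ C := hS ▸ (Subgroup.closure_le C).2 hs
    exact hC (Subgroup.mem_top x)
  let K : Subgroup G :=
    { carrier := {x | ∀ y : G, ⁅x, y⁆ ∈ D}
      one_mem' := by
        intro y
        rw [comm_one_aux]; exact one_mem D
      mul_mem' := by
        intro x y hx hy z
        rw [comm_mul_aux]
        exact mul_mem (hD.conj_mem _ (hy z) x) (hx z)
      inv_mem' := by
        intro x hx y
        rw [comm_inv_aux]
        have : x⁻¹ * ⁅x, y⁆⁻¹ * x = x⁻¹ * ⁅x, y⁆⁻¹ * x⁻¹⁻¹ := by group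
        rw [this]
        exact hD.conj_mem _ (inv_mem (hx y)) x⁻¹ }
  have hK : (⊤ : Subgroup G) ≤ K :=
    hS ▸ (Subgroup.closure_le K).2 (fun s hsS => hstep s (fun t ht => h s hsS t ht))
  rw [commutator_def, Subgroup.commutator_le]
  intro g _ p _
  exact hK (Subgroup.mem_top g) p

/-- If `G` is a finite group with abelian commutator subgroup,
`G = ⟨a, G'Z(G)⟩` (so that `G/(G'Z(G))` is cyclic generated by `a`), then
`g ↦ ⁅g, a⁆` is a surjective homomorphism from `G'Z(G)` onto `G'` with kernel `Z(G)`. -/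
theorem stmt0 {G : Type*} [Group G] [Finite G]
    (hG' : IsMulCommutative (commutator G)) (a : G)
    (hgen : Subgroup.closure ({a} ∪ (commutator G ⊔ Subgroup.center G : Subgroup G)) = ⊤) :
    ∃ f : ↥(commutator G ⊔ Subgroup.center G) →* G,
      (∀ g : ↥(commutator G ⊔ Subgroup.center G), f g = ⁅(g : G), a⁆) ∧
      (∀ y ∈ commutator G, ∃ g : ↥(commutator G ⊔ Subgroup.center G), f g = y) ∧
      (∀ g : ↥(commutator G ⊔ Subgroup.center G), f g = 1 ↔ (g : G) ∈ Subgroup.center G) := by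
  set N : Subgroup G := commutator G ⊔ Subgroup.center G with hN
  -- commutator elements pairwise commute
  have hGcomm : ∀ c ∈ commutator G, ∀ c' ∈ commutator G, c * c' = c' * c := by
    intro c hc c' hc'
    have := hG'.is_comm.comm ⟨c, hc⟩ ⟨c', hc'⟩
    exact congrArg Subtype.val this
  -- commutator elements commute with all of N
  have hcommN : ∀ c ∈ commutator G, ∀ n ∈ N, c * n = n * c := by
    intro c hc
    have hle : N ≤ Subgroup.centralizer {c} := by
      apply sup_le
      · intro c' hc'
        rw [Subgroup.mem_centralizer_iff]
        rintro g hg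
        rw [Set.mem_singleton_iff] at hg
        rw [hg]
        exact hGcomm c hc c' hc'
      · exact Subgroup.center_le_centralizer {c}
    intro n hn
    exact (hle hn) c rfl
  -- N is abelian
  have hNcomm : ∀ x ∈ N, ∀ y ∈ N, x * y = y * x := by
    have hle : N ≤ Subgroup.centralizer (N : Set G) := by
      apply sup_le
      · intro c hc
        rw [Subgroup.mem_centralizer_iff]
        intro n hn
        exact (hcommN c hc n hn).symm
      · exact Subgroup.center_le_centralizer _
    intro x hx y hy
    exact (hle hy) x hx
  have hmemG' : ∀ g h : G, ⁅g, h⁆ ∈ commutator G := by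
    intro g h
    rw [commutator_def]
    exact Subgroup.commutator_mem_commutator (Subgroup.mem_top g) (Subgroup.mem_top h)
  -- N is normal
  have hNnormal : ∀ g : G, ∀ n ∈ N, g * n * g⁻¹ ∈ N := by
    intro g n hn
    have hid : g * n * g⁻¹ = ⁅g, n⁆ * n := by group
    rw [hid]
    exact mul_mem (le_sup_left (a := commutator G) (b := Subgroup.center G) (hmemG' g n)) hn
  -- the homomorphism
  let f : N →* G :=
    { toFun := fun g => ⁅(g : G), a⁆
      map_one' := by simp
      map_mul' := by
        intro g h
        show ⁅((g : G) * h), a⁆ = ⁅(g : G), a⁆ * ⁅(h : G), a⁆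
        have h1 : ⁅((g : G) * h), a⁆ = (g : G) * ⁅(h : G), a⁆ * (g : G)⁻¹ * ⁅(g : G), a⁆ :=
          comm_mul_aux _ _ _
        have h2 : ⁅(h : G), a⁆ * (g : G) = (g : G) * ⁅(h : G), a⁆ :=
          hcommN _ (hmemG' h a) _ g.2
        have h3 : ⁅(g : G), a⁆ * ⁅(h : G), a⁆ = ⁅(h : G), a⁆ * ⁅(g : G), a⁆ :=
          hGcomm _ (hmemG' g a) _ (hmemG' h a)
        rw [h1, ← h2, h3]
        group }
  have hfval : ∀ g : ↥N, f g = ⁅(g : G), a⁆ := fun g => rfl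
  -- range of f
  set D : Subgroup G := f.range with hD
  have hDsub : D ≤ commutator G := by
    rintro x ⟨g, rfl⟩
    exact hmemG' _ _
  have hDmem : ∀ n ∈ N, ⁅n, a⁆ ∈ D := by
    intro n hn
    exact ⟨⟨n, hn⟩, rfl⟩
  -- D is normal
  have hDnormal : D.Normal := by
    constructor
    intro x hx g
    have hgnorm : (⊤ : Subgroup G) ≤ Subgroup.normalizer (D : Set G) := by
      rw [← hgen]
      apply (Subgroup.closure_le _).2
      rintro s (hs | hs)
      · rw [Set.mem_singleton_iff] at hs
        subst hs
        rw [SetLike.mem_coe, Subgroup.mem_normalizer_iff]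
        intro x
        constructor
        · rintro ⟨g, rfl⟩
          rw [hfval]
          have hid : s * ⁅(g : G), s⁆ * s⁻¹ = ⁅s * (g : G) * s⁻¹, s⁆ := by group
          rw [hid]
          exact hDmem _ (hNnormal s _ g.2)
        · rintro hx
          obtain ⟨g, hg⟩ := hx
          rw [hfval] at hg
          have hid2 : x = ⁅s⁻¹ * (g : G) * s, s⁆ := by
            have h4 : s⁻¹ * ⁅(g : G), s⁆ * s = ⁅s⁻¹ * (g : G) * s, s⁆ := by group
            rw [← h4, hg]; group
          rw [hid2]
          have h5 : (s⁻¹ * (g : G) * s : G) = s⁻¹ * (g : G) * s⁻¹⁻¹ := by group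
          rw [h5]
          exact hDmem _ (hNnormal s⁻¹ _ g.2)
      · rw [SetLike.mem_coe, Subgroup.mem_normalizer_iff]
        intro x
        constructor
        · intro hx
          have hxc : x ∈ commutator G := hDsub hx
          have : x * s = s * x := hcommN x hxc s hs
          have hid : s * x * s⁻¹ = x := by
            rw [← this]; group
          rw [hid]; exact hx
        · intro hx
          have hxc : s * x * s⁻¹ ∈ commutator G := hDsub hx
          have hcomm := hcommN _ hxc s hs
          have h3 : s * x = s * (s * x * s⁻¹) := by rw [← hcomm]; group
          have h2 : x = s * x * s⁻¹ := mul_left_cancel h3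
          rw [h2]
          exact hx
    have := hgnorm (Subgroup.mem_top g)
    rw [Subgroup.mem_normalizer_iff] at this
    exact (this x).1 hx
  -- surjectivity onto commutator G
  have hsurj : commutator G ≤ D := by
    apply myaux D hDnormal _ hgen
    rintro s (hs | hs) t (ht | ht)
    · rw [Set.mem_singleton_iff] at hs ht; subst hs; subst ht
      simpa using one_mem D
    · rw [Set.mem_singleton_iff] at hs; subst hs
      have : ⁅s, t⁆ = ⁅t, s⁆⁻¹ := (commutatorElement_inv t s).symm
      rw [this]
      exact inv_mem (hDmem t ht)
    · rw [Set.mem_singleton_iff] at ht; subst ht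
      exact hDmem s hs
    · have : ⁅s, t⁆ = 1 := commutatorElement_eq_one_iff_mul_comm.2 (hNcomm s hs t ht)
      rw [this]; exact one_mem D
  refine ⟨f, hfval, ?_, ?_⟩
  · intro y hy
    obtain ⟨g, hg⟩ := hsurj hy
    exact ⟨g, hg⟩
  · intro g
    rw [hfval]
    constructor
    · intro hfg
      have hcomm : (g : G) * a = a * (g : G) := commutatorElement_eq_one_iff_mul_comm.1 hfg
      rw [Subgroup.mem_center_iff]
      intro h
      have hle : (⊤ : Subgroup G) ≤ Subgroup.centralizer {(g : G)} := by
        rw [← hgen]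
        apply (Subgroup.closure_le _).2
        rintro s (hs | hs)
        · rw [Set.mem_singleton_iff] at hs; subst hs
          rw [SetLike.mem_coe, Subgroup.mem_centralizer_iff]
          rintro x hx
          rw [Set.mem_singleton_iff] at hx; subst hx
          exact hcomm
        · rw [SetLike.mem_coe, Subgroup.mem_centralizer_iff]
          rintro x hx
          rw [Set.mem_singleton_iff] at hx; subst hx
          exact hNcomm _ g.2 s hs
      exact ((hle (Subgroup.mem_top h)) _ rfl).symm
    · intro hz
      exact commutatorElement_eq_one_iff_mul_comm.2 (hz.comm a)
end

section
/- If G is a finite non-abelian p-group with abelian commutator subgroup G', then the quotient G/(G'Z(G)) is not cyclic. -/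
variable (G : Type*) [Group G]

open scoped commutatorElement

/-- A finite non-abelian `p`-group with abelian commutator subgroup
has non-cyclic quotient `G/(G'Z(G))`. -/
theorem stmt1 {p : ℕ} [Fact p.Prime] {G : Type*} [Group G] [Finite G]
    (hp : IsPGroup p G) (hna : ¬ ∀ x y : G, Commute x y)
    (hG' : IsMulCommutative (commutator G)) :
    ¬ IsCyclic (G ⧸ (commutator G ⊔ Subgroup.center G)) := by
  intro hcyc
  set K : Subgroup G := commutator G ⊔ Subgroup.center G with hK
  set N : Subgroup G := (⊤ : Subgroup G).lowerCentralSeries 2 with hNdef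
  have hN2 : N = ⁅(⊤ : Subgroup G).lowerCentralSeries 1, (⊤ : Subgroup G)⁆ := rfl
  haveI : N.Normal := by rw [hNdef]; infer_instance
  -- key: commutator G ≤ N
  have key : commutator G ≤ N := by
    obtain ⟨gbar, hg⟩ := hcyc.exists_generator
    obtain ⟨a, ha⟩ := QuotientGroup.mk_surjective gbar
    have decomp : ∀ x : G, ∃ m : ℤ, (a ^ m)⁻¹ * x ∈ K := by
      intro x
      obtain ⟨m, hm⟩ := hg (QuotientGroup.mk x)
      refine ⟨m, ?_⟩
      have : (QuotientGroup.mk (a ^ m) : G ⧸ K) = QuotientGroup.mk x := by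
        rw [QuotientGroup.mk_zpow, ha]; exact hm
      exact QuotientGroup.eq.mp this
    -- K maps into center of G ⧸ N
    have hcent : ∀ k ∈ K, (QuotientGroup.mk k : G ⧸ N) ∈ Subgroup.center (G ⧸ N) := by
      intro k hk
      have hle : K ≤ (Subgroup.center (G ⧸ N)).comap (QuotientGroup.mk' N) := by
        rw [hK, sup_le_iff]
        constructor
        · intro c hc
          simp only [Subgroup.mem_comap, QuotientGroup.mk'_apply]
          rw [Subgroup.mem_center_iff]
          intro q
          obtain ⟨w, rfl⟩ := QuotientGroup.mk_surjective q
          rw [← QuotientGroup.mk_mul, ← QuotientGroup.mk_mul]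
          apply QuotientGroup.eq.mpr
          have : (w * c)⁻¹ * (c * w) = ⁅c⁻¹, w⁻¹⁆ := by
            group
          rw [this, hN2]
          exact Subgroup.commutator_mem_commutator
            (by rw [lowerCentralSeries_one]; exact inv_mem hc) (Subgroup.mem_top _)
        · intro z hz
          simp only [Subgroup.mem_comap, QuotientGroup.mk'_apply]
          rw [Subgroup.mem_center_iff]
          intro q
          obtain ⟨w, rfl⟩ := QuotientGroup.mk_surjective q
          rw [← QuotientGroup.mk_mul, ← QuotientGroup.mk_mul,
            Subgroup.mem_center_iff.mp hz w]
        
      exact hle hk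
    rw [commutator_def, Subgroup.commutator_le]
    intro x _ y _
    obtain ⟨m, hxm⟩ := decomp x
    obtain ⟨n, hyn⟩ := decomp y
    rw [← QuotientGroup.eq_one_iff]
    have hmkc : (QuotientGroup.mk ⁅x, y⁆ : G ⧸ N)
        = ⁅(QuotientGroup.mk x : G ⧸ N), (QuotientGroup.mk y : G ⧸ N)⁆ :=
      map_commutatorElement (QuotientGroup.mk' N) x y
    rw [hmkc, commutatorElement_eq_one_iff_commute]
    have hx : (QuotientGroup.mk x : G ⧸ N)
        = (QuotientGroup.mk a : G ⧸ N) ^ m * QuotientGroup.mk ((a ^ m)⁻¹ * x) := by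
      rw [← QuotientGroup.mk_zpow, ← QuotientGroup.mk_mul, mul_inv_cancel_left]
    have hy : (QuotientGroup.mk y : G ⧸ N)
        = (QuotientGroup.mk a : G ⧸ N) ^ n * QuotientGroup.mk ((a ^ n)⁻¹ * y) := by
      rw [← QuotientGroup.mk_zpow, ← QuotientGroup.mk_mul, mul_inv_cancel_left]
    have hu := hcent _ hxm
    have hv := hcent _ hyn
    set A : G ⧸ N := QuotientGroup.mk a
    rw [hx, hy]
    have h1 : Commute (A ^ m) (A ^ n * QuotientGroup.mk ((a ^ n)⁻¹ * y)) :=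
      ((Commute.refl A).zpow_zpow m n).mul_right (Subgroup.mem_center_iff.mp hv (A ^ m))
    have h2 : Commute (QuotientGroup.mk ((a ^ m)⁻¹ * x) : G ⧸ N)
        (A ^ n * QuotientGroup.mk ((a ^ n)⁻¹ * y)) :=
      (Subgroup.mem_center_iff.mp hu _).symm
    exact h1.mul_left h2
  -- lower central series stabilizes at γ1, contradiction with nilpotency
  have step : ∀ k : ℕ, commutator G ≤ (⊤ : Subgroup G).lowerCentralSeries (k + 1) := by
    intro k
    induction k with
    | zero => rw [lowerCentralSeries_one]
    | succ k ih =>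
      calc commutator G ≤ N := key
        _ = ⁅(⊤ : Subgroup G).lowerCentralSeries 1, ⊤⁆ := hN2
        _ ≤ ⁅(⊤ : Subgroup G).lowerCentralSeries (k+1), ⊤⁆ :=
            Subgroup.commutator_mono (by rw [lowerCentralSeries_one]; exact ih) le_rfl
        _ = (⊤ : Subgroup G).lowerCentralSeries (k + 2) := rfl
  haveI := hp.isNilpotent
  obtain ⟨n, hn⟩ := nilpotent_iff_lowerCentralSeries.mp this
  have hbot : commutator G = ⊥ := by
    refine le_bot_iff.mp ?_
    cases n with
    | zero => rw [← hn]; exact le_top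
    | succ k => rw [← hn]; exact step k
  apply hna
  intro x y
  have : ⁅x, y⁆ ∈ commutator G := Subgroup.commutator_mem_commutator (Subgroup.mem_top _) (Subgroup.mem_top _)
  rw [hbot, Subgroup.mem_bot] at this
  exact commutatorElement_eq_one_iff_commute.mp this
end

section
/- If G is a nonabelian group in which all automorphisms are central (i.e., every automorphism commutes with every inner automorphism), then G is nilpotent of class exactly 2. -/
variable (G : Type*) [Group G]

/-- If `G` is a nonabelian group in which every automorphism is central,
then `G` is nilpotent of class exactly 2 (i.e. `Z₂(G) = G` but `Z₁(G) ≠ G`). -/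
theorem stmt2 {G : Type*} [Group G]
    (hna : ¬ ∀ x y : G, Commute x y)
    (hall : ∀ α : MulAut G, α ∈ Autcent G) :
    upperCentralSeries G 2 = ⊤ ∧ upperCentralSeries G 1 ≠ ⊤ := by
  have key : ∀ a b : G, a * b * a⁻¹ * b⁻¹ ∈ Subgroup.center G := by
    intro a b
    rw [Subgroup.mem_center_iff]
    intro z
    have h := hall (MulAut.conj a) (MulAut.conj b) ⟨b, rfl⟩
    have h2 : MulAut.conj (b * a) = MulAut.conj (a * b) := by
      rw [map_mul, map_mul]; exact h
    have h2' : MulAut.conj ((b * a)⁻¹) = MulAut.conj ((a * b)⁻¹) := by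
      rw [map_inv, map_inv, h2]
    have h5 := congrArg (fun f : MulAut G => f z) h2'
    simp only [MulAut.conj_apply] at h5
    have h6 : (a * b * a⁻¹ * b⁻¹) * z * (a * b * a⁻¹ * b⁻¹)⁻¹ = z := by
      calc (a * b * a⁻¹ * b⁻¹) * z * (a * b * a⁻¹ * b⁻¹)⁻¹
          = (a * b) * ((b * a)⁻¹ * z * ((b * a)⁻¹)⁻¹) * (a * b)⁻¹ := by group
        _ = (a * b) * ((a * b)⁻¹ * z * ((a * b)⁻¹)⁻¹) * (a * b)⁻¹ := by rw [h5]
        _ = z := by group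
    conv_lhs => rw [← h6]
    group
  constructor
  · rw [eq_top_iff]
    intro x _
    show x ∈ Subgroup.upperCentralSeries G 2
    rw [show (2:ℕ) = 1 + 1 from rfl, mem_upperCentralSeries_succ_iff]
    intro y
    rw [upperCentralSeries_one]
    exact key x y
  · show Subgroup.upperCentralSeries G 1 ≠ ⊤
    rw [upperCentralSeries_one]
    intro h
    apply hna
    intro x y
    have : y ∈ Subgroup.center G := h ▸ Subgroup.mem_top y
    exact Subgroup.mem_center_iff.mp this x
end

section
/- For any group G, the group Autcent_Z(G) of central automorphisms of G fixing Z(G) elementwise is isomorphic to Hom(G/(G'Z(G)), Z(G)). -/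
variable (G : Type*) [Group G]

open scoped IsMulCommutative

open scoped commutatorElement

section Aux

variable {G : Type*} [Group G]

local notation "N" => commutator G ⊔ Subgroup.center G

lemma center_comm {z : G} (hz : z ∈ Subgroup.center G) (x : G) :
    z * x = x * z := (Subgroup.mem_center_iff.mp hz x).symm

lemma mk_eq_of_center {z : G} (hz : z ∈ Subgroup.center G) :
    ((z : G) : G ⧸ N) = 1 :=
  (QuotientGroup.eq_one_iff z).mpr (Subgroup.mem_sup_right hz)

lemma mk_conj (g x : G) : ((g * x * g⁻¹ : G) : G ⧸ N) = (x : G ⧸ N) := by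
  rw [QuotientGroup.eq]
  have : ⁅x, g⁆ ∈ commutator G :=
    Subgroup.commutator_mem_commutator (Subgroup.mem_top x) (Subgroup.mem_top g)
  have h2 : (g * x * g⁻¹)⁻¹ * x = ⁅g, x⁻¹⁆ := by
    rw [commutatorElement_def]; group
  rw [h2]
  exact Subgroup.mem_sup_left
    (Subgroup.commutator_mem_commutator (Subgroup.mem_top g) (Subgroup.mem_top x⁻¹))

/-- forward map on elements -/
def Thom (f : (G ⧸ N) →* Subgroup.center G) : G →* G where
  toFun g := g * (f (g : G ⧸ N) : G)
  map_one' := by simp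
  map_mul' := by
    intro a b
    show a * b * (f ((a * b : G) : G ⧸ N) : G) = a * (f (a : G ⧸ N) : G) * (b * (f (b : G ⧸ N) : G))
    have h : (f ((a * b : G) : G ⧸ N) : G) = (f a : G) * (f b : G) := by
      rw [show ((a * b : G) : G ⧸ N) = (a : G ⧸ N) * (b : G ⧸ N) from rfl, map_mul,
        Subgroup.coe_mul]
    rw [h]
    have hc := center_comm (f (a : G ⧸ N)).2 b
    rw [mul_assoc a b, ← mul_assoc b, ← hc]
    group


section withFinite
variable [Finite G]

omit [Finite G] in
lemma Thom_injective (f : (G ⧸ N) →* Subgroup.center G) :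
    Function.Injective (Thom f) := by
  rw [injective_iff_map_eq_one]
  intro g hg
  have hg' : g * (f (g : G ⧸ N) : G) = 1 := hg
  have hgc : g ∈ Subgroup.center G := by
    have : g = ((f (g : G ⧸ N) : G))⁻¹ := by
      rw [eq_inv_iff_mul_eq_one]; exact hg'
    rw [this]
    exact inv_mem (f (g : G ⧸ N)).2
  have h1 : ((g : G) : G ⧸ N) = 1 := mk_eq_of_center hgc
  rw [h1, map_one] at hg'
  simpa using hg'

/-- The automorphism associated to a hom. -/
noncomputable def Taut (f : (G ⧸ N) →* Subgroup.center G) : MulAut G :=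
  MulEquiv.ofBijective (Thom f) (Finite.injective_iff_bijective.mp (Thom_injective f))

lemma Taut_apply (f : (G ⧸ N) →* Subgroup.center G) (x : G) :
    Taut f x = x * (f (x : G ⧸ N) : G) := rfl

lemma Taut_mem (f : (G ⧸ N) →* Subgroup.center G) : Taut f ∈ AutcentZ G := by
  rw [AutcentZ, Subgroup.mem_inf]
  constructor
  · rw [Autcent]
    refine Subgroup.mem_centralizer_iff.mpr ?_
    rintro β ⟨g, rfl⟩
    ext x
    show MulAut.conj g (Taut f x) = Taut f (MulAut.conj g x)
    rw [Taut_apply, Taut_apply, MulAut.conj_apply, MulAut.conj_apply, mk_conj]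
    have hc := center_comm (f (x : G ⧸ N)).2 g⁻¹
    rw [mul_assoc (g * x) g⁻¹, ← hc]
    group
  · intro z hz
    show Taut f z = z
    rw [Taut_apply, mk_eq_of_center hz, map_one]
    simp

end withFinite

lemma conj_eq (α : MulAut G) (hα : α ∈ Autcent G) (g x : G) :
    α g * x * (α g)⁻¹ = g * x * g⁻¹ := by
  have h : MulAut.conj g * α = α * MulAut.conj g := hα (MulAut.conj g) ⟨g, rfl⟩
  have h2 : ∀ y, g * α y * g⁻¹ = α (g * y * g⁻¹) := by
    intro y
    have := congrArg (fun β : MulAut G => β y) h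
    simpa using this
  calc α g * x * (α g)⁻¹ = α (g * α⁻¹ x * g⁻¹) := by
        rw [map_mul, map_mul, map_inv]
        simp
    _ = g * α (α⁻¹ x) * g⁻¹ := (h2 _).symm
    _ = g * x * g⁻¹ := by simp

lemma shom_mem (α : MulAut G) (hα : α ∈ Autcent G) (g : G) :
    g⁻¹ * α g ∈ Subgroup.center G := by
  refine Subgroup.mem_center_iff.mpr fun x => ?_
  have h := conj_eq α hα g x
  have h' : α g * x = g * x * g⁻¹ * α g := by
    rw [← h]; group
  rw [mul_assoc g⁻¹, h']
  group

/-- The hom associated to a central automorphism. -/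
def Shom (α : AutcentZ G) : G →* Subgroup.center G where
  toFun g := ⟨g⁻¹ * α.1 g, shom_mem α.1 (Subgroup.mem_inf.mp α.2).1 g⟩
  map_one' := by ext; simp
  map_mul' := by
    intro a b
    ext
    show (a * b)⁻¹ * α.1 (a * b) = a⁻¹ * α.1 a * (b⁻¹ * α.1 b)
    have hc := center_comm (shom_mem α.1 (Subgroup.mem_inf.mp α.2).1 a) b⁻¹
    rw [map_mul, mul_inv_rev]
    calc b⁻¹ * a⁻¹ * (α.1 a * α.1 b) = b⁻¹ * (a⁻¹ * α.1 a) * α.1 b := by group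
      _ = (a⁻¹ * α.1 a) * b⁻¹ * α.1 b := by rw [← hc]
      _ = a⁻¹ * α.1 a * (b⁻¹ * α.1 b) := by group

lemma shom_ker (α : AutcentZ G) : ∀ x ∈ N, Shom α x = 1 := by
  intro x hx
  have hle : N ≤ (Shom α).ker := by
    refine sup_le (Abelianization.commutator_subset_ker _) ?_
    intro z hz
    rw [MonoidHom.mem_ker]
    ext
    show z⁻¹ * α.1 z = 1
    rw [(Subgroup.mem_inf.mp α.2).2 z hz]
    simp
  exact hle hx

/-- The induced hom on the quotient. -/
def Sbar (α : AutcentZ G) : (G ⧸ N) →* Subgroup.center G :=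
  QuotientGroup.lift _ (Shom α) (shom_ker α)

end Aux

/-- For a finite group `G`, the group of central automorphisms fixing
the center elementwise is isomorphic to `Hom(G/(G'Z(G)), Z(G))`. -/
theorem stmt3 {G : Type*} [Group G] [Finite G] :
    Nonempty (AutcentZ G ≃*
      ((G ⧸ (commutator G ⊔ Subgroup.center G)) →* Subgroup.center G)) := by
  refine ⟨MulEquiv.symm (MulEquiv.mk (Equiv.mk
    (fun f => ⟨Taut f, Taut_mem f⟩) (fun α => Sbar α) ?_ ?_) ?_)⟩
  · intro f
    ext q
    show q⁻¹ * Taut f q = ((f (q : G ⧸ (commutator G ⊔ Subgroup.center G))) : G)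
    rw [Taut_apply, inv_mul_cancel_left]
  · intro α
    refine Subtype.ext (MulEquiv.ext fun x => ?_)
    show Taut (Sbar α) x = α.1 x
    rw [Taut_apply]
    show x * (x⁻¹ * α.1 x) = α.1 x
    rw [mul_inv_cancel_left]
  · intro f f'
    refine Subtype.ext (MulEquiv.ext fun x => ?_)
    show Taut (f * f') x = Taut f (Taut f' x)
    rw [Taut_apply, Taut_apply, Taut_apply]
    have h1 : ((x * ((f' (x : G ⧸ (commutator G ⊔ Subgroup.center G))) : G) : G) :
        G ⧸ (commutator G ⊔ Subgroup.center G)) = (x : G ⧸ (commutator G ⊔ Subgroup.center G)) := by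
      rw [QuotientGroup.mk_mul, mk_eq_of_center (f' _).2, mul_one]
    rw [h1, MonoidHom.mul_apply, Subgroup.coe_mul]
    have hc := center_comm (f (x : G ⧸ _)).2 ((f' (x : G ⧸ _)) : G)
    rw [hc]
    group
end

section
/- Let G be a finite p-group such that Z(G) is not contained in G' and the nilpotence class of G is at least 3. Then G is not of maximal class, |Z(G)| ≥ p², and |G| ≥ p⁵. -/
variable (G : Type*) [Group G]

open Subgroup Group
open scoped commutatorElement

-- nontrivial p-group has card ≥ p
lemma aux_card_ge_p {p : ℕ} [Fact p.Prime] {H : Type*} [Group H] [Finite H]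
    (hp : IsPGroup p H) [Nontrivial H] : p ≤ Nat.card H := by
  obtain ⟨k, hk0, hk⟩ := hp.nontrivial_iff_card.mp ‹_›
  rw [hk]
  exact Nat.le_self_pow hk0.ne' p

-- noncyclic p-group has card ≥ p^2
lemma aux_card_ge_p2 {p : ℕ} [Fact p.Prime] {H : Type*} [Group H] [Finite H]
    (hp : IsPGroup p H) (h : ¬ IsCyclic H) : p ^ 2 ≤ Nat.card H := by
  obtain ⟨k, hk⟩ := IsPGroup.iff_card.mp hp
  by_contra hc
  push_neg at hc
  rw [hk] at hc
  have hp1 : 1 < p := (Fact.out (p := p.Prime)).one_lt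
  have hk2 : k < 2 := by
    by_contra hk2
    push_neg at hk2
    exact absurd (Nat.pow_le_pow_right (le_of_lt hp1) hk2) (not_le.mpr hc)
  interval_cases k
  · have : Nat.card H = 1 := by simpa using hk
    have : Subsingleton H := Nat.card_eq_one_iff_unique.mp this |>.1
    exact h isCyclic_of_subsingleton
  · exact h (isCyclic_of_prime_card (by simpa using hk))

-- nontrivial normal subgroup of a p-group meets the center nontrivially
lemma aux_meets_center {p : ℕ} [Fact p.Prime] {G : Type*} [Group G] [Finite G]
    (hp : IsPGroup p G) {N : Subgroup G} [N.Normal] (hN : N ≠ ⊥) :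
    ∃ w : G, w ∈ N ⊓ Subgroup.center G ∧ w ≠ 1 := by
  haveI hnt : Nontrivial N := Subgroup.nontrivial_iff_ne_bot N |>.mpr hN
  have hpN : IsPGroup p N := hp.to_subgroup N
  obtain ⟨k, hk0, hk⟩ := hpN.nontrivial_iff_card.mp hnt
  have hdvd : p ∣ Nat.card N := hk ▸ dvd_pow_self p hk0.ne'
  have hp' : IsPGroup p (ConjAct G) := hp.of_equiv ConjAct.toConjAct
  have h1 : (1 : N) ∈ MulAction.fixedPoints (ConjAct G) N := by
    intro g
    exact Subtype.ext (by rw [ConjAct.Subgroup.val_conj_smul]; simp [ConjAct.smul_def])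
  obtain ⟨b, hb, hb1⟩ := hp'.exists_fixed_point_of_prime_dvd_card_of_fixed_point N hdvd h1
  refine ⟨(b : G), Subgroup.mem_inf.mpr ⟨b.2, ?_⟩, ?_⟩
  · rw [Subgroup.mem_center_iff]
    intro g
    have h2 := congrArg (Subtype.val) (hb (ConjAct.toConjAct g))
    rw [ConjAct.Subgroup.val_conj_smul, ConjAct.toConjAct_smul] at h2
    exact mul_inv_eq_iff_eq_mul.mp h2
  · intro h
    exact hb1 (Subtype.ext (by simp [h])).symm

lemma aux_card_ge_pow {p : ℕ} [Fact p.Prime] :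
    ∀ c : ℕ, ∀ {H : Type*} [Group H] [Finite H] [Group.IsNilpotent H], IsPGroup p H →
      2 ≤ c → Group.nilpotencyClass H = c → p ^ (c + 1) ≤ Nat.card H := by
  intro c
  induction c using Nat.strong_induction_on with
  | _ c ih =>
  intro H _ _ _ hp hc hclass
  haveI : Nontrivial H := by
    rcases subsingleton_or_nontrivial H with hs | hn
    · rw [Group.nilpotencyClass_zero_iff_subsingleton.mpr hs] at hclass; omega
    · exact hn
  haveI : Nontrivial (Subgroup.center H) := hp.center_nontrivial
  have hQp : IsPGroup p (H ⧸ Subgroup.center H) := hp.to_quotient _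
  have hQclass : Group.nilpotencyClass (H ⧸ Subgroup.center H) = c - 1 := by
    rw [Group.nilpotencyClass_quotient_center, hclass]
  have hZ : p ≤ Nat.card (Subgroup.center H) := aux_card_ge_p (hp.to_subgroup _)
  have hcards : Nat.card H
      = Nat.card (H ⧸ Subgroup.center H) * Nat.card (Subgroup.center H) :=
    Subgroup.card_eq_card_quotient_mul_card_subgroup _
  have hppos : 0 < p := (Fact.out (p := p.Prime)).pos
  rcases eq_or_lt_of_le hc with h2 | h3
  · have hQnc : ¬ IsCyclic (H ⧸ Subgroup.center H) := by
      intro hcyc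
      have hcomm : ∀ a b : H, a * b = b * a := fun a b =>
        commutative_of_cyclic_center_quotient (QuotientGroup.mk' _)
          (le_of_eq (QuotientGroup.ker_mk' _)) a b
      have htop : Subgroup.center H = ⊤ := by
        ext x
        simp only [Subgroup.mem_center_iff, Subgroup.mem_top, iff_true]
        intro b; exact hcomm b x
      have hle : Group.nilpotencyClass H ≤ 1 := by
        apply Subgroup.upperCentralSeries_eq_top_iff_nilpotencyClass_le.mp
        rw [Subgroup.upperCentralSeries_one, htop]
      omega
    have hQ2 : p ^ 2 ≤ Nat.card (H ⧸ Subgroup.center H) := aux_card_ge_p2 hQp hQnc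
    calc p ^ (c + 1) = p ^ 2 * p := by rw [← h2]; ring
      _ ≤ Nat.card (H ⧸ Subgroup.center H) * Nat.card (Subgroup.center H) :=
          Nat.mul_le_mul hQ2 hZ
      _ = Nat.card H := hcards.symm
  · have hIH := ih (c - 1) (by omega) hQp (by omega) hQclass
    have heq : (c - 1) + 1 = c := by omega
    rw [heq] at hIH
    calc p ^ (c + 1) = p ^ c * p := by ring
      _ ≤ Nat.card (H ⧸ Subgroup.center H) * Nat.card (Subgroup.center H) :=
          Nat.mul_le_mul hIH hZ
      _ = Nat.card H := hcards.symm


/-- A finite `p`-group of order `p^n` with `Z(G) ⊄ G'` and nilpotence class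
at least 3 is not of maximal class, has `|Z(G)| ≥ p²`, and `|G| ≥ p⁵`. -/
theorem stmt6 {p n : ℕ} [Fact p.Prime] {G : Type*} [Group G] [Finite G]
    [Group.IsNilpotent G]
    (hp : IsPGroup p G) (hcard : Nat.card G = p ^ n)
    (hZ : ¬ Subgroup.center G ≤ commutator G)
    (hcl : 3 ≤ Group.nilpotencyClass G) :
    Group.nilpotencyClass G ≠ n - 1 ∧
    p ^ 2 ≤ Nat.card (Subgroup.center G) ∧
    p ^ 5 ≤ Nat.card G := by

  have hp1 : 1 < p := (Fact.out (p := p.Prime)).one_lt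
  set c := Group.nilpotencyClass G with hc
  -- G is nonabelian: commutator ≠ ⊥
  have hGne : commutator G ≠ ⊥ := by
    intro hbot
    have htop : Subgroup.center G = ⊤ := by
      rw [eq_top_iff]
      intro x _
      rw [Subgroup.mem_center_iff]
      intro g
      have hmem : ⁅g, x⁆ ∈ commutator G := by
        rw [_root_.commutator_def]
        exact Subgroup.commutator_mem_commutator (Subgroup.mem_top g) (Subgroup.mem_top x)
      rw [hbot, Subgroup.mem_bot] at hmem
      exact commutatorElement_eq_one_iff_mul_comm.mp hmem
    have hle : Group.nilpotencyClass G ≤ 1 := by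
      apply Subgroup.upperCentralSeries_eq_top_iff_nilpotencyClass_le.mp
      rw [Subgroup.upperCentralSeries_one, htop]
    omega
  -- part 2 : |Z(G)| ≥ p^2
  obtain ⟨w, hw, hw1⟩ := aux_meets_center hp hGne
  obtain ⟨z, hzZ, hzC⟩ := SetLike.not_le_iff_exists.mp hZ
  have hKle : commutator G ⊓ Subgroup.center G ≤ Subgroup.center G := inf_le_right
  have hKnt : Nontrivial (commutator G ⊓ Subgroup.center G : Subgroup G) :=
    ⟨⟨w, hw⟩, 1, fun h => hw1 (congrArg Subtype.val h)⟩
  obtain ⟨a, ha0, haK⟩ := (hp.to_subgroup _).nontrivial_iff_card.mp hKnt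
  obtain ⟨b, hbZ⟩ := IsPGroup.iff_card.mp (hp.to_subgroup (Subgroup.center G))
  have hKne : commutator G ⊓ Subgroup.center G ≠ Subgroup.center G := by
    intro h
    have hzK : z ∈ commutator G ⊓ Subgroup.center G := h.symm ▸ hzZ
    exact hzC (Subgroup.mem_inf.mp hzK).1
  have hlt : Nat.card (commutator G ⊓ Subgroup.center G : Subgroup G)
      < Nat.card (Subgroup.center G) :=
    lt_of_le_of_ne (Nat.le_of_dvd Nat.card_pos (Subgroup.card_dvd_of_le hKle))
      (fun h => hKne (Subgroup.eq_of_le_of_card_ge hKle h.ge))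
  rw [haK, hbZ] at hlt
  have hab : a < b := (Nat.pow_lt_pow_iff_right hp1).mp hlt
  have part2 : p ^ 2 ≤ Nat.card (Subgroup.center G) := by
    rw [hbZ]
    exact Nat.pow_le_pow_right (le_of_lt hp1) (by omega)
  -- part 3 : |G| ≥ p^(c+2)
  haveI : Nontrivial G := by
    rcases subsingleton_or_nontrivial G with hs | hn
    · rw [Group.nilpotencyClass_zero_iff_subsingleton.mpr hs] at hc; omega
    · exact hn
  have hQclass : Group.nilpotencyClass (G ⧸ Subgroup.center G) = c - 1 := by
    rw [Group.nilpotencyClass_quotient_center]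
  have hQ : p ^ (c - 1 + 1) ≤ Nat.card (G ⧸ Subgroup.center G) :=
    aux_card_ge_pow (c - 1) (hp.to_quotient _) (by omega) hQclass
  have hc1 : c - 1 + 1 = c := by omega
  rw [hc1] at hQ
  have hcards : Nat.card G
      = Nat.card (G ⧸ Subgroup.center G) * Nat.card (Subgroup.center G) :=
    Subgroup.card_eq_card_quotient_mul_card_subgroup _
  have hbig : p ^ (c + 2) ≤ Nat.card G := by
    calc p ^ (c + 2) = p ^ c * p ^ 2 := by ring
      _ ≤ Nat.card (G ⧸ Subgroup.center G) * Nat.card (Subgroup.center G) :=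
          Nat.mul_le_mul hQ part2
      _ = Nat.card G := hcards.symm
  have part3 : p ^ 5 ≤ Nat.card G :=
    le_trans (Nat.pow_le_pow_right (le_of_lt hp1) (by omega)) hbig
  have hn5 : c + 2 ≤ n := by
    rw [hcard] at hbig
    exact (Nat.pow_le_pow_iff_right hp1).mp hbig
  exact ⟨by omega, part2, part3⟩
end

section
/- There is no finite p-group G of order at most p⁶ with Z(G) not contained in G' and class at least 3 such that Z(Inn(G)) = Autcent_Z(G) < Autcent(G). -/
variable (G : Type*) [Group G]

open Subgroup
open scoped commutatorElement

section AuxPGroup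

variable {p : ℕ} [Fact p.Prime] {H : Type*} [Group H]

lemma aux_orderOf_pow (hH : IsPGroup p H) (x : H) : ∃ k, orderOf x = p ^ k := by
  obtain ⟨k, hk⟩ := hH x
  obtain ⟨j, _, hj⟩ := (Nat.dvd_prime_pow Fact.out).mp (orderOf_dvd_of_pow_eq_one hk)
  exact ⟨j, hj⟩

lemma aux_cyclic_of_card_le (hH : IsPGroup p H) [Finite H] (h : Nat.card H ≤ p) :
    IsCyclic H := by
  obtain ⟨n, hn⟩ := IsPGroup.iff_card.mp hH
  rcases n with _ | n
  · have : Nat.card H = 1 := by simpa using hn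
    have : Subsingleton H := (Nat.card_eq_one_iff_unique.mp this).1
    exact isCyclic_of_subsingleton
  · rcases n with _ | n
    · exact isCyclic_of_prime_card (by simpa using hn)
    · exfalso
      have : p ^ (n + 2) ≤ p := hn ▸ h
      have h2 : p ^ 1 < p ^ (n + 2) :=
        Nat.pow_lt_pow_right (Fact.out : p.Prime).one_lt (by omega)
      rw [pow_one] at h2
      omega

lemma aux_comm_of_card_le_sq (hH : IsPGroup p H) [Finite H]
    (h : Nat.card H ≤ p ^ 2) (a b : H) : a * b = b * a := by
  rcases subsingleton_or_nontrivial H with hs | hn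
  · exact Subsingleton.elim _ _
  · have hZ : Nontrivial (center H) := hH.center_nontrivial
    have hcZ : p ≤ Nat.card (center H) := by
      obtain ⟨m, hm⟩ := IsPGroup.iff_card.mp (hH.to_subgroup (center H))
      have h1 : 1 < Nat.card (center H) := Finite.one_lt_card_iff_nontrivial.mpr hZ
      rcases m with _ | m
      · rw [pow_zero] at hm; omega
      · rw [hm]
        calc p = p ^ 1 := (pow_one p).symm
        _ ≤ p ^ (m + 1) := Nat.pow_le_pow_right (Fact.out : p.Prime).pos (by omega)
    have hmul : Nat.card (H ⧸ center H) * Nat.card (center H) = Nat.card H :=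
      (Subgroup.card_eq_card_quotient_mul_card_subgroup (center H)).symm
    have hq : Nat.card (H ⧸ center H) ≤ p := by
      by_contra hcon
      push_neg at hcon
      have hple : 0 < Nat.card (center H) := Nat.card_pos
      have : p * p < Nat.card (H ⧸ center H) * Nat.card (center H) :=
        Nat.mul_lt_mul_of_lt_of_le hcon hcZ hple
      rw [hmul] at this
      have hps : p ^ 2 = p * p := by ring
      omega
    have : IsCyclic (H ⧸ center H) := aux_cyclic_of_card_le (hH.to_quotient _) hq
    exact commutative_of_cyclic_center_quotient (QuotientGroup.mk' (center H))
      (by rw [QuotientGroup.ker_mk']) a b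

lemma aux_sq_dvd_of_noncomm (hH : IsPGroup p H) [Finite H]
    (h : ¬ ∀ a b : H, a * b = b * a) : p ^ 2 ∣ Nat.card (H ⧸ center H) := by
  obtain ⟨m, hm⟩ := IsPGroup.iff_card.mp (hH.to_quotient (center H))
  rcases m with _ | m
  · exfalso
    apply h
    have : IsCyclic (H ⧸ center H) := aux_cyclic_of_card_le (hH.to_quotient _)
      (by rw [hm]; simpa using (Fact.out : p.Prime).one_lt.le)
    exact fun a b => commutative_of_cyclic_center_quotient (QuotientGroup.mk' (center H))
      (by rw [QuotientGroup.ker_mk']) a b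
  · rcases m with _ | m
    · exfalso
      apply h
      have : IsCyclic (H ⧸ center H) := aux_cyclic_of_card_le (hH.to_quotient _) (by rw [hm]; simp)
      exact fun a b => commutative_of_cyclic_center_quotient (QuotientGroup.mk' (center H))
        (by rw [QuotientGroup.ker_mk']) a b
    · rw [hm]
      exact pow_dvd_pow p (by omega)

end AuxPGroup

section CommIdent

variable {H : Type*} [Group H]

lemma ci_mul_left (hc : ∀ a b : H, ⁅a, b⁆ ∈ Subgroup.center H) (a b k : H) :
    ⁅a * b, k⁆ = ⁅a, k⁆ * ⁅b, k⁆ := by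
  have h := Subgroup.mem_center_iff.mp (hc b k)
  calc ⁅a * b, k⁆ = a * ⁅b, k⁆ * (a⁻¹ * ⁅a, k⁆) := by
        simp only [commutatorElement_def]; group
    _ = ⁅b, k⁆ * a * (a⁻¹ * ⁅a, k⁆) := by rw [h a]
    _ = ⁅b, k⁆ * ⁅a, k⁆ := by group
    _ = ⁅a, k⁆ * ⁅b, k⁆ := (h ⁅a, k⁆).symm

lemma ci_inv_left (hc : ∀ a b : H, ⁅a, b⁆ ∈ Subgroup.center H) (a k : H) :
    ⁅a⁻¹, k⁆ = ⁅a, k⁆⁻¹ := by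
  have := ci_mul_left hc a⁻¹ a k
  rw [inv_mul_cancel] at this
  have h1 : (1 : H) = ⁅(1 : H), k⁆ := by group
  rw [← h1] at this
  exact eq_inv_of_mul_eq_one_left this.symm

lemma ci_pow_left (hc : ∀ a b : H, ⁅a, b⁆ ∈ Subgroup.center H) (a k : H) (n : ℕ) :
    ⁅a ^ n, k⁆ = ⁅a, k⁆ ^ n := by
  induction n with
  | zero => group
  | succ n ih => rw [pow_succ, ci_mul_left hc, ih, pow_succ]

lemma ci_zpow_left (hc : ∀ a b : H, ⁅a, b⁆ ∈ Subgroup.center H) (a k : H) (n : ℤ) :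
    ⁅a ^ n, k⁆ = ⁅a, k⁆ ^ n := by
  cases n with
  | ofNat m => simpa using ci_pow_left hc a k m
  | negSucc m =>
      rw [zpow_negSucc, zpow_negSucc, ci_inv_left hc, ci_pow_left hc]

lemma ci_zpow_right (hc : ∀ a b : H, ⁅a, b⁆ ∈ Subgroup.center H) (a k : H) (n : ℤ) :
    ⁅a, k ^ n⁆ = ⁅a, k⁆ ^ n := by
  rw [← commutatorElement_inv, ci_zpow_left hc, ← inv_zpow, commutatorElement_inv]

lemma ci_mul_right (hc : ∀ a b : H, ⁅a, b⁆ ∈ Subgroup.center H) (a k l : H) :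
    ⁅a, k * l⁆ = ⁅a, k⁆ * ⁅a, l⁆ := by
  have h := Subgroup.mem_center_iff.mp (hc a l)
  rw [← commutatorElement_inv, ci_mul_left hc, mul_inv_rev,
    commutatorElement_inv, commutatorElement_inv]
  exact (h ⁅a, k⁆).symm

lemma ci_central_right (a z : H) (hz : z ∈ Subgroup.center H) : ⁅a, z⁆ = 1 := by
  rw [commutatorElement_eq_one_iff_mul_comm]
  exact Subgroup.mem_center_iff.mp hz a

lemma ci_central_left (a z : H) (hz : z ∈ Subgroup.center H) : ⁅z, a⁆ = 1 := by
  rw [commutatorElement_eq_one_iff_mul_comm]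
  exact (Subgroup.mem_center_iff.mp hz a).symm

end CommIdent

section Bilinear

variable {p : ℕ} [Fact p.Prime] {H : Type*} [Group H]

lemma aux_mem_closure_pair {K : Type*} [Group K] {x y a : K} (hxy : x * y = y * x)
    (ha : a ∈ Subgroup.closure ({x, y} : Set K)) : ∃ i j : ℤ, a = x ^ i * y ^ j := by
  have hc : Commute x y := hxy
  induction ha using Subgroup.closure_induction with
  | mem g hg =>
      rcases hg with rfl | rfl
      · exact ⟨1, 0, by simp⟩
      · exact ⟨0, 1, by simp⟩
  | one => exact ⟨0, 0, by simp⟩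
  | mul g h _ _ ihg ihh =>
      obtain ⟨i, j, rfl⟩ := ihg
      obtain ⟨k, l, rfl⟩ := ihh
      refine ⟨i + k, j + l, ?_⟩
      have h1 : y ^ j * x ^ k = x ^ k * y ^ j := (hc.symm.zpow_zpow j k)
      rw [zpow_add, zpow_add]
      calc x ^ i * y ^ j * (x ^ k * y ^ l)
          = x ^ i * (y ^ j * x ^ k) * y ^ l := by group
        _ = x ^ i * (x ^ k * y ^ j) * y ^ l := by rw [h1]
        _ = x ^ i * x ^ k * (y ^ j * y ^ l) := by group
  | inv g _ ihg =>
      obtain ⟨i, j, rfl⟩ := ihg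
      refine ⟨-i, -j, ?_⟩
      have h1 : y ^ (-j) * x ^ (-i) = x ^ (-i) * y ^ (-j) := (hc.symm.zpow_zpow (-j) (-i))
      rw [mul_inv_rev, ← zpow_neg, ← zpow_neg, h1]

lemma aux_card_commutator_le [Finite H] (hH : IsPGroup p H)
    (hcard : Nat.card (H ⧸ Subgroup.center H) ∣ p ^ 2) :
    Nat.card (commutator H) ≤ p := by
  have hp : p.Prime := Fact.out
  by_cases hcyc : IsCyclic (H ⧸ Subgroup.center H)
  · have hcomm : ∀ a b : H, a * b = b * a := fun a b =>
      commutative_of_cyclic_center_quotient (QuotientGroup.mk' _)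
        (by rw [QuotientGroup.ker_mk']) a b
    have hbot : commutator H = ⊥ := by
      rw [commutator_def, eq_bot_iff, Subgroup.commutator_le]
      intro a _ b _
      rw [Subgroup.mem_bot, commutatorElement_eq_one_iff_mul_comm]
      exact hcomm a b
    rw [hbot]
    simpa using hp.one_lt.le
  · set R := H ⧸ Subgroup.center H with hR
    have hRp : IsPGroup p R := hH.to_quotient _
    -- card R = p ^ 2
    obtain ⟨j, hj⟩ := IsPGroup.iff_card.mp hRp
    have hjdvd : p ^ j ∣ p ^ 2 := hj ▸ hcard
    have hjle : j ≤ 2 := (Nat.pow_dvd_pow_iff_le_right hp.one_lt).mp hjdvd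
    have hj2 : j = 2 := by
      rcases Nat.lt_or_ge j 2 with h2 | h2
      · exfalso
        apply hcyc
        apply aux_cyclic_of_card_le hRp
        rw [hj]
        calc p ^ j ≤ p ^ 1 := Nat.pow_le_pow_right hp.pos (by omega)
          _ = p := pow_one p
      · omega
    rw [hj2] at hj
    have hcommR : ∀ a b : R, a * b = b * a :=
      aux_comm_of_card_le_sq hRp (le_of_eq hj)
    -- exponent p
    have hexp : ∀ u : R, u ^ p = 1 := by
      intro u
      by_contra hu
      obtain ⟨a, ha⟩ := aux_orderOf_pow hRp u
      have hdvd : orderOf u ∣ p ^ 2 := hj ▸ orderOf_dvd_natCard u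
      have ha2 : a ≤ 2 := (Nat.pow_dvd_pow_iff_le_right hp.one_lt).mp (ha ▸ hdvd)
      have hnd : ¬ orderOf u ∣ p := fun h => hu (orderOf_dvd_iff_pow_eq_one.mp h)
      have ha2' : a = 2 := by
        rcases Nat.lt_or_ge a 2 with h2 | h2
        · exfalso
          apply hnd
          rw [ha]
          calc p ^ a ∣ p ^ 1 := pow_dvd_pow p (by omega)
            _ = p := pow_one p
        · omega
      exact hcyc (isCyclic_of_orderOf_eq_card u (by rw [ha, ha2', hj]))
    -- find generators
    have hnontriv : Nontrivial R := by
      apply Finite.one_lt_card_iff_nontrivial.mp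
      rw [hj]
      nlinarith [hp.one_lt]
    obtain ⟨xb, hxb⟩ := exists_ne (1 : R)
    have hordx : orderOf xb = p := by
      have h1 : orderOf xb ∣ p := orderOf_dvd_iff_pow_eq_one.mpr (hexp xb)
      rcases (Nat.Prime.eq_one_or_self_of_dvd hp _ h1) with h | h
      · exact absurd (orderOf_eq_one_iff.mp h) hxb
      · exact h
    have hyb : ∃ yb : R, yb ∉ Subgroup.zpowers xb := by
      by_contra hcon
      push_neg at hcon
      have htop : Subgroup.zpowers xb = ⊤ := (Subgroup.eq_top_iff' _).mpr hcon
      have hle : Nat.card (Subgroup.zpowers xb) = Nat.card R :=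
        (Subgroup.card_eq_iff_eq_top _).mpr htop
      rw [Nat.card_zpowers, hordx, hj] at hle
      nlinarith [hp.one_lt]
    obtain ⟨yb, hyb⟩ := hyb
    -- closure {xb, yb} = ⊤
    have hC : Subgroup.closure ({xb, yb} : Set R) = ⊤ := by
      set C := Subgroup.closure ({xb, yb} : Set R) with hCdef
      have hxC : xb ∈ C := Subgroup.subset_closure (by simp)
      have hyC : yb ∈ C := Subgroup.subset_closure (by simp)
      obtain ⟨c, hc⟩ := IsPGroup.iff_card.mp (hRp.to_subgroup C)
      have hcdvd : Nat.card C ∣ p ^ 2 := hj ▸ Subgroup.card_subgroup_dvd_card C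
      have hc2 : c ≤ 2 := (Nat.pow_dvd_pow_iff_le_right hp.one_lt).mp (hc ▸ hcdvd)
      rcases Nat.lt_or_ge c 2 with h2 | h2
      · exfalso
        have hcle : Nat.card C ≤ p := by
          rw [hc]
          calc p ^ c ≤ p ^ 1 := Nat.pow_le_pow_right hp.pos (by omega)
            _ = p := pow_one p
        have hzle : Subgroup.zpowers xb ≤ C := Subgroup.zpowers_le.mpr hxC
        have : Subgroup.zpowers xb = C := by
          apply Subgroup.eq_of_le_of_card_ge hzle
          rw [Nat.card_zpowers, hordx]
          exact hcle
        exact hyb (this ▸ hyC)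
      · have : c = 2 := by omega
        apply Subgroup.eq_top_of_card_eq
        rw [hc, this, hj]
    -- commutators are central
    have hcent : ∀ a b : H, ⁅a, b⁆ ∈ Subgroup.center H := by
      intro a b
      have : (QuotientGroup.mk' (Subgroup.center H)) ⁅a, b⁆ = 1 := by
        rw [map_commutatorElement, commutatorElement_eq_one_iff_mul_comm]
        exact hcommR _ _
      exact (QuotientGroup.eq_one_iff _).mp this
    obtain ⟨x, hx⟩ := QuotientGroup.mk'_surjective (Subgroup.center H) xb
    obtain ⟨y, hy⟩ := QuotientGroup.mk'_surjective (Subgroup.center H) yb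
    -- decomposition
    have hdec : ∀ a : H, ∃ (i j : ℤ) (z : H), z ∈ Subgroup.center H ∧
        a = x ^ i * y ^ j * z := by
      intro a
      have hmem : (QuotientGroup.mk' (Subgroup.center H) a) ∈
          Subgroup.closure ({xb, yb} : Set R) := hC ▸ Subgroup.mem_top _
      obtain ⟨i, j, hij⟩ := aux_mem_closure_pair (hcommR xb yb) hmem
      refine ⟨i, j, (x ^ i * y ^ j)⁻¹ * a, ?_, by group⟩
      apply (QuotientGroup.eq_one_iff _).mp
      show (QuotientGroup.mk' (Subgroup.center H)) ((x ^ i * y ^ j)⁻¹ * a) = 1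
      rw [map_mul, map_inv, map_mul, map_zpow, map_zpow, hx, hy, hij, inv_mul_cancel]
    set c := ⁅x, y⁆ with hcdef
    -- commutator H ≤ zpowers c
    have hcle : commutator H ≤ Subgroup.zpowers c := by
      rw [_root_.commutator_def, Subgroup.commutator_le]
      intro a _ b _
      obtain ⟨i, j, z, hz, rfl⟩ := hdec a
      obtain ⟨k, l, w, hw, rfl⟩ := hdec b
      rw [ci_mul_left hcent, ci_central_left _ _ hz, mul_one]
      rw [ci_mul_right hcent, ci_central_right _ _ hw, mul_one]
      rw [ci_mul_left hcent, ci_mul_right hcent, ci_mul_right hcent]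
      rw [ci_zpow_left hcent, ci_zpow_left hcent, ci_zpow_left hcent, ci_zpow_left hcent]
      rw [ci_zpow_right hcent, ci_zpow_right hcent, ci_zpow_right hcent, ci_zpow_right hcent]
      have hyx : ⁅y, x⁆ = c⁻¹ := by rw [← commutatorElement_inv]
      rw [commutatorElement_self, commutatorElement_self, hyx]
      refine mul_mem (mul_mem ?_ ?_) (mul_mem ?_ ?_)
      · simpa using one_mem (Subgroup.zpowers c)
      · exact Subgroup.zpow_mem _ (Subgroup.zpow_mem _ (Subgroup.mem_zpowers c) l) i
      · exact Subgroup.zpow_mem _ (Subgroup.zpow_mem _ (inv_mem (Subgroup.mem_zpowers c)) k) j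
      · simpa using one_mem (Subgroup.zpowers c)
    -- c has order dividing p
    have hcp : c ^ p = 1 := by
      have hxp : x ^ p ∈ Subgroup.center H := by
        apply (QuotientGroup.eq_one_iff _).mp
        show (QuotientGroup.mk' (Subgroup.center H)) (x ^ p) = 1
        rw [map_pow, hx]
        exact hexp xb
      rw [hcdef, ← ci_pow_left hcent, ci_central_left _ _ hxp]
    calc Nat.card (commutator H) ≤ Nat.card (Subgroup.zpowers c) :=
          Subgroup.card_le_of_le hcle
      _ = orderOf c := Nat.card_zpowers c
      _ ≤ p := Nat.le_of_dvd hp.pos (orderOf_dvd_of_pow_eq_one hcp)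

end Bilinear

section Frattini

variable {p : ℕ} [Fact p.Prime] {H : Type*} [Group H]

lemma aux_comm_of_abelianization_card_le [Finite H] (hH : IsPGroup p H)
    (h : Nat.card (H ⧸ _root_.commutator H) ≤ p) : ∀ a b : H, a * b = b * a := by
  have hp : p.Prime := Fact.out
  have hnil : Group.IsNilpotent H := hH.isNilpotent
  obtain ⟨m, hm⟩ := IsPGroup.iff_card.mp (hH.to_quotient (_root_.commutator H))
  rcases m with _ | m
  · -- quotient trivial : commutator = ⊤, hence H trivial
    rw [pow_zero] at hm
    have hsub : Subsingleton (H ⧸ _root_.commutator H) :=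
      (Nat.card_eq_one_iff_unique.mp hm).1
    have htop : _root_.commutator H = ⊤ := by
      rw [eq_top_iff]
      intro g _
      have : (QuotientGroup.mk' (_root_.commutator H)) g = 1 := Subsingleton.elim _ _
      exact (QuotientGroup.eq_one_iff _).mp this
    have hlcs : ∀ n, Subgroup.lowerCentralSeries (⊤ : Subgroup H) n = ⊤ := by
      intro n
      induction n with
      | zero => exact Subgroup.lowerCentralSeries_zero _
      | succ n ih =>
          rw [Subgroup.lowerCentralSeries_succ, ih]
          show ⁅(⊤ : Subgroup H), (⊤ : Subgroup H)⁆ = ⊤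
          rw [← _root_.commutator_def, htop]
    obtain ⟨n, hn⟩ := Subgroup.nilpotent_iff_lowerCentralSeries.mp hnil
    have hbot : (⊤ : Subgroup H) = ⊥ := (hlcs n).symm.trans hn
    intro a b
    have ha : a = 1 := by
      have : a ∈ (⊥ : Subgroup H) := hbot ▸ Subgroup.mem_top a
      simpa using this
    have hb : b = 1 := by
      have : b ∈ (⊥ : Subgroup H) := hbot ▸ Subgroup.mem_top b
      simpa using this
    rw [ha, hb]
  · -- card quotient = p
    have hm1 : m = 0 := by
      have h2 : p ^ (m + 1) ≤ p ^ 1 := by rw [pow_one]; exact hm ▸ h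
      have := (Nat.pow_le_pow_iff_right hp.one_lt).mp h2
      omega
    rw [hm1, pow_one] at hm
    have hqnt : Nontrivial (H ⧸ _root_.commutator H) :=
      Finite.one_lt_card_iff_nontrivial.mp (hm ▸ hp.one_lt)
    obtain ⟨xb, hxb⟩ := exists_ne (1 : H ⧸ _root_.commutator H)
    obtain ⟨x, hx⟩ := QuotientGroup.mk'_surjective (_root_.commutator H) xb
    have hsup : ∀ g : H, g ∈ Subgroup.zpowers x ⊔ _root_.commutator H := by
      intro g
      have hord : orderOf xb = p := by
        have h1 : orderOf xb ∣ p := hm ▸ orderOf_dvd_natCard xb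
        rcases hp.eq_one_or_self_of_dvd _ h1 with h' | h'
        · exact absurd (orderOf_eq_one_iff.mp h') hxb
        · exact h'
      have hxtop : Subgroup.zpowers xb = ⊤ := by
        apply Subgroup.eq_top_of_card_eq
        rw [Nat.card_zpowers, hord, hm]
      have hg : QuotientGroup.mk' (_root_.commutator H) g ∈ Subgroup.zpowers xb :=
        hxtop ▸ Subgroup.mem_top _
      obtain ⟨n, hn⟩ := hg
      have hmem : x ^ (-n) * g ∈ _root_.commutator H := by
        apply (QuotientGroup.eq_one_iff _).mp
        show (QuotientGroup.mk' (_root_.commutator H)) (x ^ (-n) * g) = 1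
        rw [map_mul, map_zpow, hx, ← hn]
        group
      have hgeq : g = x ^ n * (x ^ (-n) * g) := by group
      rw [hgeq]
      exact Subgroup.mul_mem_sup (Subgroup.zpow_mem _ (Subgroup.mem_zpowers x) n) hmem
    have hcyc : Subgroup.zpowers x = ⊤ := by
      by_contra hne
      haveI : Finite (Subgroup H) :=
        Finite.of_injective (fun K => (K : Set H)) SetLike.coe_injective
      set S : Set (Subgroup H) := {K | Subgroup.zpowers x ≤ K ∧ K ≠ ⊤} with hS
      obtain ⟨M, hMS, hMmax⟩ := Set.Finite.exists_maximalFor id S (Set.toFinite S)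
        ⟨Subgroup.zpowers x, le_rfl, hne⟩
      have hcoatom : IsCoatom M := by
        constructor
        · exact hMS.2
        · intro K hMK
          by_contra hKne
          have hKS : K ∈ S := ⟨le_trans hMS.1 hMK.le, hKne⟩
          exact absurd (le_antisymm hMK.le (hMmax hKS hMK.le)) (ne_of_lt hMK)
      haveI hMnormal : M.Normal :=
        Subgroup.NormalizerCondition.normal_of_coatom M normalizerCondition_of_isNilpotent hcoatom
      -- find a generator of the quotient of prime order
      have hqnt' : Nontrivial (H ⧸ M) := by
        have : ¬ ∀ g : H, g ∈ M := fun hall =>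
          hMS.2 ((Subgroup.eq_top_iff' M).mpr hall)
        push_neg at this
        obtain ⟨g, hg⟩ := this
        refine ⟨⟨QuotientGroup.mk' M g, 1, fun he => hg ?_⟩⟩
        exact (QuotientGroup.eq_one_iff _).mp he
      have hqp : p ∣ Nat.card (H ⧸ M) := by
        obtain ⟨t, ht⟩ := IsPGroup.iff_card.mp (hH.to_quotient M)
        rcases t with _ | t
        · rw [pow_zero] at ht
          exact absurd (Finite.one_lt_card_iff_nontrivial.mpr hqnt') (by omega)
        · rw [ht]
          exact dvd_pow_self p (Nat.succ_ne_zero t)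
      obtain ⟨u, hu⟩ := exists_prime_orderOf_dvd_card' p hqp
      have hune : u ≠ 1 := by
        intro h1
        rw [h1, orderOf_one] at hu
        have := hp.one_lt
        omega
      obtain ⟨v, hv⟩ := QuotientGroup.mk'_surjective M u
      set K' := Subgroup.comap (QuotientGroup.mk' M) (Subgroup.zpowers u) with hK'
      have hMK : M ≤ K' := by
        intro g hg
        show (QuotientGroup.mk' M) g ∈ Subgroup.zpowers u
        have : (QuotientGroup.mk' M) g = 1 := (QuotientGroup.eq_one_iff _).mpr hg
        rw [this]
        exact one_mem _
      have hvK : v ∈ K' := by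
        show (QuotientGroup.mk' M) v ∈ Subgroup.zpowers u
        rw [hv]
        exact Subgroup.mem_zpowers u
      have hvM : v ∉ M := fun hvm =>
        hune (by rw [← hv]; exact (QuotientGroup.eq_one_iff _).mpr hvm)
      have hlt : M < K' := lt_of_le_of_ne hMK (fun he => hvM (he ▸ hvK))
      have hKtop : K' = ⊤ := hcoatom.2 _ hlt
      have hutop : ∀ w : H ⧸ M, w ∈ Subgroup.zpowers u := by
        intro w
        obtain ⟨g, hg⟩ := QuotientGroup.mk'_surjective M w
        have hgK : g ∈ K' := hKtop ▸ Subgroup.mem_top g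
        rw [← hg]
        exact hgK
      have hqcomm : ∀ a b : H ⧸ M, a * b = b * a := by
        intro a b
        obtain ⟨i, hi⟩ := hutop a
        obtain ⟨j, hj⟩ := hutop b
        rw [← hi, ← hj]
        exact ((Commute.refl u).zpow_zpow i j).eq
      have hcM : _root_.commutator H ≤ M := by
        rw [_root_.commutator_def, Subgroup.commutator_le]
        intro a _ b _
        apply (QuotientGroup.eq_one_iff _).mp
        show (QuotientGroup.mk' M) ⁅a, b⁆ = 1
        rw [map_commutatorElement, commutatorElement_eq_one_iff_mul_comm]
        exact hqcomm _ _
      apply hMS.2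
      rw [eq_top_iff]
      intro g _
      exact sup_le hMS.1 hcM (hsup g)
    intro a b
    have ha : a ∈ Subgroup.zpowers x := hcyc ▸ Subgroup.mem_top _
    have hb : b ∈ Subgroup.zpowers x := hcyc ▸ Subgroup.mem_top _
    obtain ⟨i, hi⟩ := ha
    obtain ⟨j, hj⟩ := hb
    rw [← hi, ← hj]
    exact ((Commute.refl x).zpow_zpow i j).eq

end Frattini

section Machine

variable {G : Type*} [Group G]

/-- The quotient of `G` by `G' Z(G)`, realized as the abelianization of the central quotient. -/
abbrev QG (G : Type*) [Group G] := Abelianization (G ⧸ Subgroup.center G)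

/-- The natural projection `G →* QG G`. -/
def piQ (G : Type*) [Group G] : G →* QG G :=
  (Abelianization.of).comp (QuotientGroup.mk' (Subgroup.center G))

lemma piQ_surjective : Function.Surjective (piQ G) := by
  intro q
  refine QuotientGroup.induction_on q (fun pq => ?_)
  refine QuotientGroup.induction_on pq (fun g => ⟨g, rfl⟩)

lemma piQ_center {z : G} (hz : z ∈ Subgroup.center G) : piQ G z = 1 := by
  have h1 : (QuotientGroup.mk' (Subgroup.center G)) z = 1 :=
    (QuotientGroup.eq_one_iff z).mpr hz
  show Abelianization.of ((QuotientGroup.mk' (Subgroup.center G)) z) = 1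
  rw [h1, map_one]

lemma piQ_conj (g x : G) : piQ G (g * x * g⁻¹) = piQ G x := by
  rw [map_mul, map_mul, map_inv]
  rw [mul_comm (piQ G g) (piQ G x)]
  group

/-- A homomorphism `QG G →* Z(G)` produces a central automorphism fixing the center. -/
def mkAut (φ : QG G →* Subgroup.center G) : MulAut G where
  toFun x := x * (φ (piQ G x) : G)
  invFun x := x * ((φ (piQ G x) : G))⁻¹
  left_inv := by
    intro x
    simp only []
    have h1 : piQ G (x * (φ (piQ G x) : G)) = piQ G x := by
      rw [map_mul, piQ_center (φ (piQ G x)).2, mul_one]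
    rw [h1]
    group
  right_inv := by
    intro x
    simp only []
    have h1 : piQ G (x * ((φ (piQ G x) : G))⁻¹) = piQ G x := by
      rw [map_mul, map_inv, piQ_center (φ (piQ G x)).2]
      group
    rw [h1]
    group
  map_mul' := by
    intro x y
    have h1 : ((φ (piQ G x)) : G) * y = y * (φ (piQ G x) : G) :=
      Subgroup.mem_center_iff.mp (φ (piQ G x)).2 y |>.symm
    rw [map_mul, map_mul, Subgroup.coe_mul]
    calc x * y * ((φ (piQ G x) : G) * (φ (piQ G y) : G))
        = x * (y * (φ (piQ G x) : G)) * (φ (piQ G y) : G) := by group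
      _ = x * ((φ (piQ G x) : G) * y) * (φ (piQ G y) : G) := by rw [h1]
      _ = x * (φ (piQ G x) : G) * (y * (φ (piQ G y) : G)) := by group

lemma mkAut_apply (φ : QG G →* Subgroup.center G) (x : G) :
    mkAut φ x = x * (φ (piQ G x) : G) := rfl

lemma mkAut_mem_AutcentZ (φ : QG G →* Subgroup.center G) : mkAut φ ∈ AutcentZ G := by
  refine Subgroup.mem_inf.mpr ⟨Subgroup.mem_centralizer_iff.mpr ?_, ?_⟩
  · -- Autcent : centralizes all inner automorphisms
    intro β hβ
    obtain ⟨g, rfl⟩ := hβ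
    ext x
    show (MulAut.conj g) (mkAut φ x) = mkAut φ ((MulAut.conj g) x)
    have hc : (MulAut.conj g) x = g * x * g⁻¹ := rfl
    rw [hc, mkAut_apply, mkAut_apply, piQ_conj]
    have h1 : g * (x * (φ (piQ G x) : G)) * g⁻¹ = g * x * g⁻¹ * (g * (φ (piQ G x) : G) * g⁻¹) := by
      group
    have h2 : g * (φ (piQ G x) : G) * g⁻¹ = (φ (piQ G x) : G) := by
      have := Subgroup.mem_center_iff.mp (φ (piQ G x)).2 g
      rw [this]
      group
    show (MulAut.conj g) (x * (φ (piQ G x) : G)) = g * x * g⁻¹ * (φ (piQ G x) : G)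
    have hc2 : (MulAut.conj g) (x * (φ (piQ G x) : G)) = g * (x * (φ (piQ G x) : G)) * g⁻¹ := rfl
    rw [hc2, h1, h2]
  · -- fixCenter
    intro z hz
    show z * (φ (piQ G z) : G) = z
    rw [piQ_center hz, map_one]
    simp

lemma mkAut_injective : Function.Injective (mkAut (G := G)) := by
  intro φ ψ h
  have key : ∀ x : G, φ (piQ G x) = ψ (piQ G x) := by
    intro x
    have := DFunLike.congr_fun h x
    rw [mkAut_apply, mkAut_apply] at this
    exact Subtype.ext (mul_left_cancel this)
  apply MonoidHom.ext
  intro q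
  obtain ⟨x, rfl⟩ := piQ_surjective (G := G) q
  exact key x

lemma mkAut_image_commutator (hEq : ZInn G = AutcentZ G)
    (φ : QG G →* Subgroup.center G) (q : QG G) : ((φ q : G)) ∈ _root_.commutator G := by
  obtain ⟨x, rfl⟩ := piQ_surjective (G := G) q
  have hmem : mkAut φ ∈ ZInn G := hEq ▸ mkAut_mem_AutcentZ φ
  have hinn : mkAut φ ∈ innAut G := (Subgroup.mem_inf.mp hmem).1
  obtain ⟨g, hg⟩ := hinn
  have hx := DFunLike.congr_fun hg x
  have hcx : (MulAut.conj g) x = g * x * g⁻¹ := rfl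
  rw [hcx, mkAut_apply] at hx
  have h1 : (φ (piQ G x) : G) = ⁅x⁻¹, g⁆ := by
    have h2 : (φ (piQ G x) : G) = x⁻¹ * (g * x * g⁻¹) := by rw [hx]; group
    rw [h2, commutatorElement_def]
    group
  rw [h1]
  exact Subgroup.commutator_mem_commutator (Subgroup.mem_top _) (Subgroup.mem_top _)

lemma card_center_congr {A B : Type*} [Group A] [Group B] (e : A ≃* B) :
    Nat.card (Subgroup.center A) = Nat.card (Subgroup.center B) := by
  apply Nat.card_congr
  refine ⟨fun a => ⟨e a.1, ?_⟩, fun b => ⟨e.symm b.1, ?_⟩, ?_, ?_⟩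
  · rw [Subgroup.mem_center_iff]
    intro b
    have := Subgroup.mem_center_iff.mp a.2 (e.symm b)
    calc b * e a.1 = e (e.symm b) * e a.1 := by rw [e.apply_symm_apply]
      _ = e (e.symm b * a.1) := by rw [map_mul]
      _ = e (a.1 * e.symm b) := by rw [this]
      _ = e a.1 * b := by rw [map_mul, e.apply_symm_apply]
  · rw [Subgroup.mem_center_iff]
    intro a
    have := Subgroup.mem_center_iff.mp b.2 (e a)
    calc a * e.symm b.1 = e.symm (e a) * e.symm b.1 := by rw [e.symm_apply_apply]
      _ = e.symm (e a * b.1) := by rw [map_mul]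
      _ = e.symm (b.1 * e a) := by rw [this]
      _ = e.symm b.1 * a := by rw [map_mul, e.symm_apply_apply]
  · intro a; ext; simp
  · intro b; ext; simp

lemma conj_ker : (MulAut.conj : G →* MulAut G).ker = Subgroup.center G := by
  ext g
  rw [MonoidHom.mem_ker, Subgroup.mem_center_iff]
  constructor
  · intro h x
    have := DFunLike.congr_fun h x
    have hc : (MulAut.conj g) x = g * x * g⁻¹ := rfl
    rw [hc] at this
    have h1 : (1 : MulAut G) x = x := rfl
    rw [h1] at this
    calc x * g = g * x * g⁻¹ * g := by rw [this]
      _ = g * x := by group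
  · intro h
    ext x
    show g * x * g⁻¹ = x
    rw [← h x]
    group

lemma card_ZInn_eq [Finite G] :
    Nat.card (ZInn G) = Nat.card (Subgroup.center (G ⧸ Subgroup.center G)) := by
  classical
  -- innAut G is isomorphic to the central quotient
  have e1 : (G ⧸ Subgroup.center G) ≃* (innAut G) :=
    (QuotientGroup.quotientMulEquivOfEq conj_ker.symm).trans
      (QuotientGroup.quotientKerEquivRange (MulAut.conj))
  have h1 : Nat.card (Subgroup.center (G ⧸ Subgroup.center G)) =
      Nat.card (Subgroup.center (innAut G)) := card_center_congr e1
  rw [h1]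
  refine (Nat.card_congr ?_).symm
  exact {
    toFun := fun a => ⟨a.1.1, Subgroup.mem_inf.mpr ⟨a.1.2,
      Subgroup.mem_centralizer_iff.mpr (fun h hh =>
        congrArg Subtype.val (Subgroup.mem_center_iff.mp a.2 ⟨h, hh⟩))⟩⟩
    invFun := fun b => ⟨⟨b.1, (Subgroup.mem_inf.mp b.2).1⟩,
      Subgroup.mem_center_iff.mpr (fun g => Subtype.ext
        (Subgroup.mem_centralizer_iff.mp (Subgroup.mem_inf.mp b.2).2 g.1 g.2))⟩
    left_inv := fun a => by ext; rfl
    right_inv := fun b => by ext; rfl }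

lemma card_hom_le_ZInn [Finite G] (hEq : ZInn G = AutcentZ G) :
    Nat.card (QG G →* Subgroup.center G) ≤ Nat.card (ZInn G) := by
  haveI : Finite (MulAut G) :=
    Finite.of_injective (fun (e : MulAut G) => (e : G → G)) (fun a b h => by
      ext x; exact congrFun h x)
  rw [hEq]
  apply Nat.card_le_card_of_injective
    (fun φ => (⟨mkAut φ, mkAut_mem_AutcentZ φ⟩ : AutcentZ G))
  intro φ ψ h
  apply mkAut_injective
  exact congrArg Subtype.val h

end Machine

section Counting

open scoped DirectSum
open scoped IsMulCommutative

variable {p : ℕ} [Fact p.Prime] {G : Type*} [Group G] [Finite G]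

lemma counting_main (hpG : IsPGroup p G) (hEq : ZInn G = AutcentZ G)
    (z₀ : G) (hz₀c : z₀ ∈ Subgroup.center G) (hz₀n : z₀ ∉ _root_.commutator G)
    (hQ : 1 < Nat.card (QG G)) :
    Nat.card (QG G) ≤ Nat.card (QG G →* Subgroup.center G) ∧
      p ^ 2 ∣ Nat.card (Subgroup.center G) := by
  classical
  have hp : p.Prime := Fact.out
  have hpC : IsPGroup p (Subgroup.center G) := hpG.to_subgroup _
  have hpQ : IsPGroup p (QG G) := (hpG.to_quotient _).to_quotient _
  obtain ⟨ι, hι, pr, hpr, er, ⟨e⟩⟩ :=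
    AddCommGroup.equiv_directSum_zmod_of_finite (Additive (QG G))
  haveI : Fintype ι := hι
  haveI hmne : ∀ i, NeZero (pr i ^ er i) :=
    fun i => ⟨pow_ne_zero _ (hpr i).pos.ne'⟩
  haveI : Finite (⨁ i, ZMod (pr i ^ er i)) :=
    Finite.of_equiv _ (Additive.ofMul.trans e.toEquiv)
  -- the cardinality of QG G equals the cardinality of the direct sum
  have hcardQ : Nat.card (QG G) = Nat.card (⨁ i, ZMod (pr i ^ er i)) :=
    Nat.card_congr (Additive.ofMul.trans e.toEquiv)
  -- each pr i ^ er i is a power of p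
  have hk : ∀ i, ∃ k, pr i ^ er i = p ^ k := by
    intro i
    obtain ⟨N, hN⟩ := IsPGroup.iff_card.mp hpQ
    have h1 : addOrderOf (DirectSum.of (fun j => ZMod (pr j ^ er j)) i 1) = pr i ^ er i := by
      rw [addOrderOf_injective (DirectSum.of (fun j => ZMod (pr j ^ er j)) i)
        (DirectSum.of_injective i) 1]
      exact ZMod.addOrderOf_one _
    have h2 : pr i ^ er i ∣ p ^ N := by
      rw [← h1, ← hN, hcardQ]
      exact addOrderOf_dvd_natCard _
    obtain ⟨k, _, hk⟩ := (Nat.dvd_prime_pow hp).mp h2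
    exact ⟨k, hk⟩
  choose k hkdef using hk
  -- the key: anything in the center killed by some pr i ^ er i lies in the commutator
  have hkey : ∀ (i : ι) (c : Subgroup.center G), c ^ (pr i ^ er i) = 1 →
      (c : G) ∈ _root_.commutator G := by
    intro i c hc
    set cc : ι → Subgroup.center G := fun j => if j = i then c else 1 with hccdef
    have hcc1 : ∀ j, (cc j) ^ (pr j ^ er j) = 1 := by
      intro j
      rw [hccdef]
      by_cases h : j = i
      · subst h
        simpa using hc
      · simp [h]
    have hpf : ∀ j : ι, ((zmultiplesHom (Additive (Subgroup.center G)))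
        (Additive.ofMul (cc j))) ((pr j ^ er j : ℕ) : ℤ) = 0 := by
      intro j
      rw [zmultiplesHom_apply, natCast_zsmul, ← ofMul_pow, hcc1 j, ofMul_one]
    set ψ : ∀ j, ZMod (pr j ^ er j) →+ Additive (Subgroup.center G) := fun j =>
      ZMod.lift (pr j ^ er j) ⟨(zmultiplesHom (Additive (Subgroup.center G)))
        (Additive.ofMul (cc j)), hpf j⟩ with hψdef
    set F : Additive (QG G) →+ Additive (Subgroup.center G) :=
      (DirectSum.toAddMonoid ψ).comp e.toAddMonoidHom with hFdef
    set φ : QG G →* Subgroup.center G := MonoidHom.toAdditive.symm F with hφdef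
    set q0 : QG G := Additive.toMul (e.symm (DirectSum.of (fun j => ZMod (pr j ^ er j)) i 1))
      with hq0def
    have hφq : φ q0 = c := by
      have h0 : φ q0 = Additive.toMul (F (e.symm (DirectSum.of _ i 1))) := rfl
      rw [h0, hFdef]
      rw [AddMonoidHom.comp_apply]
      have h1 : (e.toAddMonoidHom) (e.symm (DirectSum.of (fun j => ZMod (pr j ^ er j)) i 1)) =
          DirectSum.of (fun j => ZMod (pr j ^ er j)) i 1 := e.apply_symm_apply _
      rw [h1, DirectSum.toAddMonoid_of]
      have h2 : (1 : ZMod (pr i ^ er i)) = ((1 : ℤ) : ZMod (pr i ^ er i)) := by simp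
      rw [hψdef]
      simp only []
      rw [h2, ZMod.lift_coe, zmultiplesHom_apply, one_zsmul]
      have h3 : cc i = c := by rw [hccdef]; simp
      rw [h3]
      rfl
    have hcomm := mkAut_image_commutator hEq φ q0
    rw [hφq] at hcomm
    exact hcomm
  -- order of z₀ in the center
  set z : Subgroup.center G := ⟨z₀, hz₀c⟩ with hzdef
  obtain ⟨M, hM⟩ := aux_orderOf_pow hpC z
  have hkM : ∀ i, k i < M := by
    intro i
    have h1 : ¬ (z ^ (pr i ^ er i) = 1) := by
      intro h
      exact hz₀n (hkey i z h)
    have h2 : ¬ orderOf z ∣ pr i ^ er i := fun h => h1 (orderOf_dvd_iff_pow_eq_one.mp h)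
    rw [hM, hkdef i] at h2
    by_contra hcon
    push_neg at hcon
    exact h2 (pow_dvd_pow p hcon)
  -- part 2 : p ^ 2 divides the order of the center
  have hM2 : 2 ≤ M := by
    have hex : ∃ i, 1 ≤ k i := by
      by_contra hcon
      push_neg at hcon
      have hall : ∀ i, pr i ^ er i = 1 := by
        intro i
        have := hcon i
        interval_cases h : k i
        · rw [hkdef i, h, pow_zero]
      have hcard1 : Nat.card (⨁ i, ZMod (pr i ^ er i)) = 1 := by
        calc Nat.card (⨁ (i : ι), ZMod (pr i ^ er i))
            = Nat.card ((i : ι) → ZMod (pr i ^ er i)) :=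
              Nat.card_congr DFinsupp.equivFunOnFintype
          _ = ∏ i, Nat.card (ZMod (pr i ^ er i)) := Nat.card_pi
          _ = 1 := by
              apply Finset.prod_eq_one
              intro i _
              rw [Nat.card_zmod, hall i]
      rw [hcardQ, hcard1] at hQ
      omega
    obtain ⟨i, hi⟩ := hex
    have := hkM i
    omega
  have part2 : p ^ 2 ∣ Nat.card (Subgroup.center G) := by
    calc p ^ 2 ∣ p ^ M := pow_dvd_pow p hM2
      _ = orderOf z := hM.symm
      _ ∣ Nat.card (Subgroup.center G) := orderOf_dvd_natCard z
  -- part 1 : the injection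
  set zA : Additive (Subgroup.center G) := Additive.ofMul z with hzAdef
  have hordzA : addOrderOf zA = p ^ M := hM
  have hpfc : ∀ (j : ι) (c : ZMod (pr j ^ er j)),
      ((zmultiplesHom (Additive (Subgroup.center G)))
        ((c.val * p ^ (M - k j)) • zA)) ((pr j ^ er j : ℕ) : ℤ) = 0 := by
    intro j c
    rw [zmultiplesHom_apply, natCast_zsmul, ← mul_nsmul]
    obtain ⟨v, hv⟩ : ∃ v, c.val = v := ⟨c.val, rfl⟩
    rw [hv]
    have harith : v * p ^ (M - k j) * pr j ^ er j = p ^ M * v := by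
      have h5 : (M - k j) + k j = M := Nat.sub_add_cancel (le_of_lt (hkM j))
      rw [hkdef j]
      calc v * p ^ (M - k j) * p ^ k j
          = (p ^ (M - k j) * p ^ (k j)) * v := by ring
        _ = p ^ M * v := by rw [← pow_add, h5]
    rw [harith, mul_nsmul]
    have h6 : (p ^ M) • zA = 0 := by
      rw [← hordzA]
      exact addOrderOf_nsmul_eq_zero zA
    rw [h6, smul_zero]
  set χ : ∀ j, ZMod (pr j ^ er j) → (ZMod (pr j ^ er j) →+ Additive (Subgroup.center G)) :=
    fun j c => ZMod.lift _ ⟨(zmultiplesHom _) ((c.val * p ^ (M - k j)) • zA), hpfc j c⟩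
    with hχdef
  have hχ1 : ∀ (j : ι) (c : ZMod (pr j ^ er j)),
      χ j c (1 : ZMod (pr j ^ er j)) = (c.val * p ^ (M - k j)) • zA := by
    intro j c
    have h2 : (1 : ZMod (pr j ^ er j)) = ((1 : ℤ) : ZMod (pr j ^ er j)) := by simp
    rw [hχdef]
    simp only []
    rw [h2, ZMod.lift_coe, zmultiplesHom_apply, one_zsmul]
  have hχinj : ∀ j, Function.Injective (χ j) := by
    intro j c c' hcc
    have h1 : (c.val * p ^ (M - k j)) • zA = (c'.val * p ^ (M - k j)) • zA := by
      rw [← hχ1 j c, ← hχ1 j c', hcc]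
    have hlt : ∀ (d : ZMod (pr j ^ er j)), d.val * p ^ (M - k j) < addOrderOf zA := by
      intro d
      rw [hordzA]
      have hv : d.val < p ^ (k j) :=
        lt_of_lt_of_le (ZMod.val_lt d) (le_of_eq (hkdef j))
      calc d.val * p ^ (M - k j) < p ^ (k j) * p ^ (M - k j) :=
            mul_lt_mul_of_pos_right hv (pow_pos hp.pos _)
        _ = p ^ M := by rw [← pow_add, Nat.add_sub_cancel' (le_of_lt (hkM j))]
    have h2 := nsmul_injOn_Iio_addOrderOf (Set.mem_Iio.mpr (hlt c))
      (Set.mem_Iio.mpr (hlt c')) h1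
    have h3 : c.val = c'.val := Nat.eq_of_mul_eq_mul_right (pow_pos hp.pos _) h2
    exact ZMod.val_injective _ h3
  set Ψ : (⨁ j, ZMod (pr j ^ er j)) →
      ((⨁ j, ZMod (pr j ^ er j)) →+ Additive (Subgroup.center G)) :=
    fun v => DirectSum.toAddMonoid (fun j => χ j (v j)) with hΨdef
  have hΨinj : Function.Injective Ψ := by
    intro v v' hvv
    apply DFinsupp.ext
    intro j
    apply hχinj j
    apply DFunLike.ext
    intro x
    have h1 := DFunLike.congr_fun hvv (DirectSum.of (fun j => ZMod (pr j ^ er j)) j x)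
    rw [hΨdef] at h1
    simp only [] at h1
    rw [DirectSum.toAddMonoid_of, DirectSum.toAddMonoid_of] at h1
    exact h1
  haveI hfin1 : Finite ((⨁ j, ZMod (pr j ^ er j)) →+ Additive (Subgroup.center G)) :=
    Finite.of_injective
      (fun f => (f : (⨁ j, ZMod (pr j ^ er j)) → Additive (Subgroup.center G)))
      DFunLike.coe_injective
  have step1 : Nat.card (⨁ j, ZMod (pr j ^ er j)) ≤
      Nat.card ((⨁ j, ZMod (pr j ^ er j)) →+ Additive (Subgroup.center G)) :=
    Nat.card_le_card_of_injective Ψ hΨinj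
  have e2 : ((⨁ j, ZMod (pr j ^ er j)) →+ Additive (Subgroup.center G)) ≃
      (Additive (QG G) →+ Additive (Subgroup.center G)) :=
    { toFun := fun f => f.comp e.toAddMonoidHom
      invFun := fun f => f.comp e.symm.toAddMonoidHom
      left_inv := fun f => by ext x; simp
      right_inv := fun f => by ext x; simp }
  have e3 : (QG G →* Subgroup.center G) ≃
      (Additive (QG G) →+ Additive (Subgroup.center G)) := MonoidHom.toAdditive
  have part1 : Nat.card (QG G) ≤ Nat.card (QG G →* Subgroup.center G) := by
    calc Nat.card (QG G) = Nat.card (⨁ j, ZMod (pr j ^ er j)) := hcardQ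
      _ ≤ Nat.card ((⨁ j, ZMod (pr j ^ er j)) →+ Additive (Subgroup.center G)) := step1
      _ = Nat.card (Additive (QG G) →+ Additive (Subgroup.center G)) := Nat.card_congr e2
      _ = Nat.card (QG G →* Subgroup.center G) := (Nat.card_congr e3).symm
  exact ⟨part1, part2⟩

end Counting

/-- There is no finite `p`-group of order at most `p⁶` with `Z(G) ⊄ G'` and
nilpotence class at least 3 such that `Z(Inn(G)) = Autcent_Z(G) < Autcent(G)`. -/
theorem stmt8 {p : ℕ} [Fact p.Prime] {G : Type*} [Group G] [Finite G]
    [Group.IsNilpotent G]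
    (hp : IsPGroup p G) (hcard : Nat.card G ≤ p ^ 6)
    (hZ : ¬ Subgroup.center G ≤ commutator G)
    (hcl : 3 ≤ Group.nilpotencyClass G) :
    ¬ (ZInn G = AutcentZ G ∧ AutcentZ G < Autcent G) := by
  rintro ⟨hEq, -⟩
  classical
  have hq : p.Prime := Fact.out
  obtain ⟨z₀, hz₀c, hz₀n⟩ := SetLike.not_le_iff_exists.mp hZ
  have hpP : IsPGroup p (G ⧸ Subgroup.center G) := hp.to_quotient _
  have hpQ : IsPGroup p (QG G) := hpP.to_quotient _
  -- the central quotient is nonabelian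
  have hPnc : ¬ ∀ a b : G ⧸ Subgroup.center G, a * b = b * a := by
    intro hcomm
    have hcen : Subgroup.center (G ⧸ Subgroup.center G) = ⊤ := by
      rw [Subgroup.eq_top_iff']
      intro x
      rw [Subgroup.mem_center_iff]
      intro g
      exact hcomm g x
    have h1 : Group.nilpotencyClass (G ⧸ Subgroup.center G) ≤ 1 := by
      apply Subgroup.upperCentralSeries_eq_top_iff_nilpotencyClass_le.mp
      rw [Subgroup.upperCentralSeries_one]
      exact hcen
    have h2 : Group.nilpotencyClass (G ⧸ Subgroup.center G) =
        Group.nilpotencyClass G - 1 := nilpotencyClass_quotient_center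
    omega
  -- cardinalities as powers of p
  obtain ⟨a, ha⟩ := IsPGroup.iff_card.mp (hp.to_subgroup (Subgroup.center G))
  obtain ⟨b, hb⟩ := IsPGroup.iff_card.mp hpP
  obtain ⟨t, ht⟩ := IsPGroup.iff_card.mp hpQ
  obtain ⟨s, hs⟩ := IsPGroup.iff_card.mp
    (hpP.to_subgroup (Subgroup.center (G ⧸ Subgroup.center G)))
  obtain ⟨u, hu⟩ := IsPGroup.iff_card.mp (hpP.to_quotient
    (Subgroup.center (G ⧸ Subgroup.center G)))
  obtain ⟨d, hd⟩ := IsPGroup.iff_card.mp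
    (hpP.to_subgroup (_root_.commutator (G ⧸ Subgroup.center G)))
  -- t ≥ 2 : a nonabelian p-group has abelianization of order at least p²
  have ht2 : 2 ≤ t := by
    by_contra hcon
    push_neg at hcon
    apply hPnc
    apply aux_comm_of_abelianization_card_le hpP
    show Nat.card (QG G) ≤ p
    rw [ht]
    calc p ^ t ≤ p ^ 1 := Nat.pow_le_pow_right hq.pos (by omega)
      _ = p := pow_one p
  have hQ1 : 1 < Nat.card (QG G) := by
    rw [ht]
    calc 1 = p ^ 0 := (pow_zero p).symm
      _ < p ^ t := Nat.pow_lt_pow_right hq.one_lt (by omega)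
  -- the counting facts
  obtain ⟨hle, hdvd⟩ := counting_main hp hEq z₀ hz₀c hz₀n hQ1
  -- chain : card QG ≤ card (center P)
  have hchain : Nat.card (QG G) ≤
      Nat.card (Subgroup.center (G ⧸ Subgroup.center G)) :=
    le_trans hle ((card_hom_le_ZInn hEq).trans_eq card_ZInn_eq)
  have hts : t ≤ s := by
    rw [ht, hs] at hchain
    exact (Nat.pow_le_pow_iff_right hq.one_lt).mp hchain
  -- a ≥ 2
  have ha2 : 2 ≤ a := by
    rw [ha] at hdvd
    exact (Nat.pow_dvd_pow_iff_le_right hq.one_lt).mp hdvd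
  -- u ≥ 2
  have hu2 : 2 ≤ u := by
    have := aux_sq_dvd_of_noncomm hpP hPnc
    rw [hu] at this
    exact (Nat.pow_dvd_pow_iff_le_right hq.one_lt).mp this
  -- b + a ≤ 6
  have hba : b + a ≤ 6 := by
    have hGcard : Nat.card G = p ^ b * p ^ a := by
      rw [← ha, ← hb]
      exact Subgroup.card_eq_card_quotient_mul_card_subgroup _
    rw [hGcard, ← pow_add] at hcard
    exact (Nat.pow_le_pow_iff_right hq.one_lt).mp hcard
  -- b = u + s
  have hbus : b = u + s := by
    have h1 : Nat.card (G ⧸ Subgroup.center G) = p ^ u * p ^ s := by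
      rw [← hu, ← hs]
      exact Subgroup.card_eq_card_quotient_mul_card_subgroup _
    rw [hb, ← pow_add] at h1
    exact Nat.pow_right_injective hq.two_le h1
  -- b = t + d
  have hbtd : b = t + d := by
    have h1 : Nat.card (G ⧸ Subgroup.center G) = p ^ t * p ^ d := by
      rw [← ht, ← hd]
      exact Subgroup.card_eq_card_quotient_mul_card_subgroup _
    rw [hb, ← pow_add] at h1
    exact Nat.pow_right_injective hq.two_le h1
  -- hence u = s = 2, b = 4
  have hu2' : u = 2 ∧ s = 2 := by constructor <;> omega
  -- commutator of P is small
  have hd1 : d ≤ 1 := by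
    have hdvd2 : Nat.card ((G ⧸ Subgroup.center G) ⧸
        Subgroup.center (G ⧸ Subgroup.center G)) ∣ p ^ 2 := by
      rw [hu, hu2'.1]
    have hcP := aux_card_commutator_le hpP hdvd2
    rw [hd] at hcP
    have hple : p ^ d ≤ p ^ 1 := by rwa [pow_one]
    exact (Nat.pow_le_pow_iff_right hq.one_lt).mp hple
  omega
end

section
/- Let G be a finite p-group of order p⁷ and nilpotence class 4 with Z(G) not contained in G'. Then |G'| < p⁵. -/
variable (G : Type*) [Group G]

open scoped commutatorElement

/-- A finite `p`-group of order `p⁷` and class 4 with `Z(G) ⊄ G'`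
has `|G'| < p⁵`. -/
theorem stmt13 {p : ℕ} [Fact p.Prime] {G : Type*} [Group G] [Finite G]
    [Group.IsNilpotent G]
    (hp : IsPGroup p G) (hcard : Nat.card G = p ^ 7)
    (hcl : Group.nilpotencyClass G = 4)
    (hZ : ¬ Subgroup.center G ≤ commutator G) :
    Nat.card (commutator G) < p ^ 5 := by
  classical
  by_contra hlt
  push_neg at hlt
  have hpp : p.Prime := Fact.out
  have hp1 : 1 < p := hpp.one_lt
  obtain ⟨z, hzZ, hzc⟩ := SetLike.not_le_iff_exists.mp hZ
  set c := commutator G with hc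
  -- index arithmetic
  have hmul : c.index * Nat.card c = p ^ 7 := by
    rw [Subgroup.index_mul_card, hcard]
  have hidvd : c.index ∣ p ^ 7 := ⟨Nat.card c, hmul.symm⟩
  obtain ⟨k, hk7, hck⟩ := (Nat.dvd_prime_pow hpp).mp hidvd
  have hk2 : k ≤ 2 := by
    have h1 : p ^ k * p ^ 5 ≤ p ^ 7 := by
      calc p ^ k * p ^ 5 ≤ p ^ k * Nat.card c := Nat.mul_le_mul_left _ hlt
        _ = p ^ 7 := by rw [← hck]; exact hmul
    rw [← pow_add] at h1
    have := (Nat.pow_le_pow_iff_right hp1).mp h1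
    omega
  -- the subgroup K = <z> ⊔ c has index dividing p
  set K := Subgroup.closure {z} ⊔ c with hK
  have hcK : c ≤ K := le_sup_right
  have hzK : z ∈ K := (le_sup_left : Subgroup.closure {z} ≤ K)
    (Subgroup.subset_closure rfl)
  have hrel : c.relIndex K * K.index = c.index := Subgroup.relIndex_mul_index hcK
  have hrelne : c.relIndex K ≠ 1 := fun h =>
    hzc (Subgroup.relIndex_eq_one.mp h hzK)
  have hreldvd : c.relIndex K ∣ p ^ 7 :=
    dvd_trans ⟨K.index, hrel.symm⟩ hidvd
  obtain ⟨i, hi7, hreli⟩ := (Nat.dvd_prime_pow hpp).mp hreldvd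
  have hi1 : 1 ≤ i := by
    rcases Nat.eq_zero_or_pos i with h0 | h0
    · exfalso; apply hrelne; rw [hreli, h0, pow_zero]
    · exact h0
  have hpdvdrel : p ∣ c.relIndex K := by
    rw [hreli]
    exact dvd_pow_self p (by omega)
  have hKdvdp : K.index ∣ p := by
    have h2 : K.index * p ∣ p ^ 2 := by
      have h3 : K.index * p ∣ K.index * c.relIndex K := mul_dvd_mul_left _ hpdvdrel
      have h4 : K.index * c.relIndex K = c.index := by rw [mul_comm]; exact hrel
      rw [h4] at h3
      exact dvd_trans h3 (hck ▸ pow_dvd_pow p hk2)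
    rw [pow_two] at h2
    exact (mul_dvd_mul_iff_right (by omega : p ≠ 0)).mp h2
  -- find y with closure {z, y} ⊔ c = ⊤
  obtain ⟨y, htop⟩ : ∃ y : G, Subgroup.closure {z, y} ⊔ c = ⊤ := by
    rcases hpp.eq_one_or_self_of_dvd _ hKdvdp with h1 | hKp
    · refine ⟨z, ?_⟩
      have : ({z, z} : Set G) = {z} := by simp
      rw [this]
      exact Subgroup.index_eq_one.mp h1
    · have hKne : K ≠ ⊤ := by
        intro h
        rw [h, Subgroup.index_top] at hKp
        omega
      obtain ⟨y, hyK⟩ : ∃ y : G, y ∉ K := by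
        by_contra h
        push_neg at h
        exact hKne ((Subgroup.eq_top_iff' K).mpr h)
      set M := K ⊔ Subgroup.closure {y} with hM
      have hKM : K ≤ M := le_sup_left
      have hyM : y ∈ M := (le_sup_right : Subgroup.closure {y} ≤ M)
        (Subgroup.subset_closure rfl)
      have hrel2 : K.relIndex M * M.index = K.index := Subgroup.relIndex_mul_index hKM
      have hne2 : K.relIndex M ≠ 1 := fun h =>
        hyK (Subgroup.relIndex_eq_one.mp h hyM)
      have hMdvd : M.index ∣ p := ⟨K.relIndex M, by rw [← hKp, ← hrel2, mul_comm]⟩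
      rcases hpp.eq_one_or_self_of_dvd _ hMdvd with hM1 | hMp
      · refine ⟨y, ?_⟩
        have hMe : Subgroup.closure {z, y} ⊔ c = M := by
          have hzy : ({z, y} : Set G) = {z} ∪ {y} := rfl
          rw [hzy, Subgroup.closure_union, hM, hK]
          rw [sup_assoc, sup_assoc]
          congr 1
          exact sup_comm _ _
        rw [hMe]
        exact Subgroup.index_eq_one.mp hM1
      · exfalso
        apply hne2
        have h5 : K.relIndex M * p = p := by
          rw [← hMp]
          exact hrel2.trans (hKp.trans hMp.symm)
        exact Nat.eq_of_mul_eq_mul_right (by omega : 0 < p)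
          (by rw [h5, one_mul] : K.relIndex M * p = 1 * p)
  -- pass to Q = G / γ₃(G)
  set N := Subgroup.lowerCentralSeries (⊤ : Subgroup G) 2 with hN
  haveI : N.Normal := by rw [hN]; infer_instance
  set π := QuotientGroup.mk' N with hπ
  have hNker : ∀ g ∈ c, ∀ h : G, ⁅g, h⁆ ∈ N := by
    intro g hg h
    rw [hN, lowerCentralSeries_succ]
    exact Subgroup.commutator_mem_commutator
      (by rwa [lowerCentralSeries_one]) (Subgroup.mem_top h)
  have hcen : ∀ g ∈ c, π g ∈ Subgroup.center (G ⧸ N) := by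
    intro g hg
    rw [Subgroup.mem_center_iff]
    intro q
    induction q using QuotientGroup.induction_on with
    | H h =>
      have h1 : π ⁅g, h⁆ = 1 := MonoidHom.mem_ker.mp
        (by rw [hπ, QuotientGroup.ker_mk']; exact hNker g hg h)
      rw [map_commutatorElement, commutatorElement_eq_one_iff_mul_comm] at h1
      exact h1.symm
  have hzQ : π z ∈ Subgroup.center (G ⧸ N) := by
    rw [Subgroup.mem_center_iff]
    intro q
    induction q using QuotientGroup.induction_on with
    | H h =>
      show π h * π z = π z * π h
      rw [← map_mul, ← map_mul, (Subgroup.mem_center_iff.mp hzZ h).symm]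
  set Q := G ⧸ N
  set σ := QuotientGroup.mk' (Subgroup.center Q) with hσ
  have hcyc : ∀ w : Q ⧸ Subgroup.center Q, w ∈ Subgroup.zpowers (σ (π y)) := by
    intro w
    obtain ⟨q, rfl⟩ := QuotientGroup.mk'_surjective _ w
    obtain ⟨g, rfl⟩ := QuotientGroup.mk'_surjective N q
    have hW : (⊤ : Subgroup G) ≤
        (Subgroup.zpowers (σ (π y))).comap (σ.comp π) := by
      rw [← htop]
      apply sup_le
      · rw [Subgroup.closure_le]
        intro x hx
        simp only [Set.mem_insert_iff, Set.mem_singleton_iff] at hx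
        rcases hx with rfl | rfl
        · have h1 : σ (π x) = 1 := MonoidHom.mem_ker.mp
            (by rw [hσ, QuotientGroup.ker_mk']; exact hzQ)
          show σ.comp π x ∈ Subgroup.zpowers (σ (π y))
          rw [MonoidHom.comp_apply, h1]
          exact Subgroup.one_mem _
        · exact Subgroup.mem_zpowers _
      · intro x hx
        have h1 : σ (π x) = 1 := MonoidHom.mem_ker.mp
          (by rw [hσ, QuotientGroup.ker_mk']; exact hcen x hx)
        show σ.comp π x ∈ Subgroup.zpowers (σ (π y))
        rw [MonoidHom.comp_apply, h1]
        exact Subgroup.one_mem _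
    exact Subgroup.mem_comap.mp (hW (Subgroup.mem_top g))
  haveI : IsCyclic (Q ⧸ Subgroup.center Q) := ⟨⟨σ (π y), hcyc⟩⟩
  have hcomm : ∀ a b : Q, a * b = b * a :=
    commutative_of_cyclic_center_quotient σ (by rw [hσ, QuotientGroup.ker_mk'])
  have hle : c ≤ N := by
    rw [hc, commutator_def]
    rw [Subgroup.commutator_le]
    intro g _ h _
    rw [← QuotientGroup.ker_mk' N, MonoidHom.mem_ker]
    show π ⁅g, h⁆ = 1
    rw [map_commutatorElement, commutatorElement_eq_one_iff_mul_comm]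
    exact hcomm _ _
  -- stabilization of the lower central series
  have h12 : Subgroup.lowerCentralSeries (⊤ : Subgroup G) 1 = Subgroup.lowerCentralSeries (⊤ : Subgroup G) 2 :=
    le_antisymm (by rw [lowerCentralSeries_one]; exact hle)
      (lowerCentralSeries_antitone _ (by omega))
  have h23 : Subgroup.lowerCentralSeries (⊤ : Subgroup G) 2 = Subgroup.lowerCentralSeries (⊤ : Subgroup G) 3 := by
    have e3 : Subgroup.lowerCentralSeries (⊤ : Subgroup G) 3 = ⁅Subgroup.lowerCentralSeries (⊤ : Subgroup G) 2, ⊤⁆ :=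
      lowerCentralSeries_succ _ 2
    have e2 : Subgroup.lowerCentralSeries (⊤ : Subgroup G) 2 = ⁅Subgroup.lowerCentralSeries (⊤ : Subgroup G) 1, ⊤⁆ :=
      lowerCentralSeries_succ _ 1
    rw [e3, ← h12, ← e2, h12]
  have h34 : Subgroup.lowerCentralSeries (⊤ : Subgroup G) 3 = Subgroup.lowerCentralSeries (⊤ : Subgroup G) 4 := by
    have e4 : Subgroup.lowerCentralSeries (⊤ : Subgroup G) 4 = ⁅Subgroup.lowerCentralSeries (⊤ : Subgroup G) 3, ⊤⁆ :=
      lowerCentralSeries_succ _ 3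
    have e3 : Subgroup.lowerCentralSeries (⊤ : Subgroup G) 3 = ⁅Subgroup.lowerCentralSeries (⊤ : Subgroup G) 2, ⊤⁆ :=
      lowerCentralSeries_succ _ 2
    rw [e4, ← h23, ← e3, h23]
  have hbot : Subgroup.lowerCentralSeries (⊤ : Subgroup G) 4 = ⊥ := by
    rw [← hcl]
    exact lowerCentralSeries_nilpotencyClass
  have hcbot : c = ⊥ := by
    rw [hc, ← lowerCentralSeries_one, h12, h23, h34, hbot]
  rw [hcbot, Subgroup.card_bot] at hlt
  have h2 : 1 < p ^ 5 := Nat.one_lt_pow (by omega) hp1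
  omega
end

section
/- If H is a finite group with |H/Z(H)| = p², then |H'| ≤ p. -/
variable (G : Type*) [Group G]

open scoped commutatorElement

section WiegoldAux

variable {H : Type*} [Group H]

lemma comm_central_pow {g h : H} (hcen : ⁅g, h⁆ ∈ Subgroup.center H) :
    ∀ n : ℕ, ⁅g, h ^ n⁆ = ⁅g, h⁆ ^ n := by
  intro n
  induction n with
  | zero => simp
  | succ n ih =>
    have hx := Subgroup.mem_center_iff.mp hcen
    have key : ⁅g, h ^ (n + 1)⁆ = ⁅g, h ^ n⁆ * (h ^ n * ⁅g, h⁆ * (h ^ n)⁻¹) := by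
      simp only [commutatorElement_def, pow_succ]; group
    rw [key, hx (h ^ n), mul_inv_cancel_right, ih]
    exact (pow_succ _ _).symm

/-- For fixed right argument `b`, `g ↦ ⁅g, b⁆` is a hom when commutators are central. -/
def rightComm (hcen : ∀ g h : H, ⁅g, h⁆ ∈ Subgroup.center H) (b : H) : H →* H where
  toFun g := ⁅g, b⁆
  map_one' := commutatorElement_one_left b
  map_mul' g h := by
    have hx := Subgroup.mem_center_iff.mp (hcen h b)
    have key : ⁅g * h, b⁆ = g * ⁅h, b⁆ * g⁻¹ * ⁅g, b⁆ := by
      simp only [commutatorElement_def]; group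
    show ⁅g * h, b⁆ = ⁅g, b⁆ * ⁅h, b⁆
    rw [key, hx g, mul_inv_cancel_right]
    exact (hx ⁅g, b⁆).symm

/-- For fixed left argument `x`, `y ↦ ⁅x, y⁆` is a hom when commutators are central. -/
def leftComm (hcen : ∀ g h : H, ⁅g, h⁆ ∈ Subgroup.center H) (x : H) : H →* H where
  toFun y := ⁅x, y⁆
  map_one' := commutatorElement_one_right x
  map_mul' y z := by
    have hx := Subgroup.mem_center_iff.mp (hcen x z)
    have key : ⁅x, y * z⁆ = ⁅x, y⁆ * (y * ⁅x, z⁆ * y⁻¹) := by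
      simp only [commutatorElement_def]; group
    show ⁅x, y * z⁆ = ⁅x, y⁆ * ⁅x, z⁆
    rw [key, hx y, mul_inv_cancel_right]

end WiegoldAux

/-- If `H` is a finite group with `|H/Z(H)| = p²`, then `|H'| ≤ p`. -/
theorem stmt17 {p : ℕ} (hp : p.Prime) {H : Type*} [Group H] [Finite H]
    (hc : Nat.card (H ⧸ Subgroup.center H) = p ^ 2) :
    Nat.card (commutator H) ≤ p := by
  haveI : Fact p.Prime := ⟨hp⟩
  -- The quotient is not cyclic
  have hnc : ¬ IsCyclic (H ⧸ Subgroup.center H) := by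
    intro hcyc
    have hcomm := commutative_of_cyclic_center_quotient (QuotientGroup.mk' (Subgroup.center H))
      (le_of_eq (QuotientGroup.ker_mk' (Subgroup.center H)))
    have htop : Subgroup.center H = ⊤ := by
      rw [Subgroup.eq_top_iff']
      intro x
      exact Subgroup.mem_center_iff.mpr fun g => hcomm g x
    rw [htop] at hc
    have h1 : Nat.card (H ⧸ (⊤ : Subgroup H)) = 1 := Subgroup.index_top
    rw [hc] at h1
    exact absurd h1 (Nat.one_lt_pow two_ne_zero hp.one_lt).ne'
  have hexp : Monoid.exponent (H ⧸ Subgroup.center H) = p :=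
    (not_isCyclic_iff_exponent_eq_prime hp hc).mp hnc
  have hpow : ∀ x : H, x ^ p ∈ Subgroup.center H := by
    intro x
    rw [← QuotientGroup.eq_one_iff]
    have h1 : ((x : H ⧸ Subgroup.center H)) ^ p = 1 := by
      rw [← hexp]; exact Monoid.pow_exponent_eq_one _
    simpa using h1
  have hcommQ : ∀ a b : H ⧸ Subgroup.center H, a * b = b * a :=
    IsPGroup.commutative_of_card_eq_prime_sq hc
  have hcent : ∀ g h : H, ⁅g, h⁆ ∈ Subgroup.center H := by
    intro g h
    rw [← QuotientGroup.eq_one_iff]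
    have h1 : ((⁅g, h⁆ : H) : H ⧸ Subgroup.center H) = ⁅(g : H ⧸ Subgroup.center H), (h : H ⧸ Subgroup.center H)⁆ := by
      simp [commutatorElement_def]
    rw [h1, commutatorElement_eq_one_iff_commute]
    exact hcommQ _ _
  -- pick generators of the quotient
  haveI : Nontrivial (H ⧸ Subgroup.center H) := by
    rw [← Finite.one_lt_card_iff_nontrivial, hc]
    exact Nat.one_lt_pow two_ne_zero hp.one_lt
  obtain ⟨abar, habar⟩ : ∃ x : H ⧸ Subgroup.center H, x ≠ 1 := exists_ne 1
  have hordQ : orderOf abar = p := by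
    have h1 : orderOf abar ∣ p := hexp ▸ Monoid.order_dvd_exponent abar
    rcases (Nat.dvd_prime hp).mp h1 with h | h
    · exact absurd (orderOf_eq_one_iff.mp h) habar
    · exact h
  have hAne : Subgroup.zpowers abar ≠ ⊤ := by
    intro hA
    exact hnc ⟨⟨abar, (Subgroup.eq_top_iff' (Subgroup.zpowers abar)).mp hA⟩⟩
  obtain ⟨bbar, hbbar⟩ : ∃ y : H ⧸ Subgroup.center H, y ∉ Subgroup.zpowers abar := by
    by_contra hcon
    push_neg at hcon
    exact hAne ((Subgroup.eq_top_iff' _).mpr hcon)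
  have hab : abar ∈ Subgroup.closure ({abar, bbar} : Set (H ⧸ Subgroup.center H)) :=
    Subgroup.subset_closure (Set.mem_insert _ _)
  have hbb : bbar ∈ Subgroup.closure ({abar, bbar} : Set (H ⧸ Subgroup.center H)) :=
    Subgroup.subset_closure (Set.mem_insert_of_mem _ rfl)
  have hAB : Subgroup.zpowers abar ≤ Subgroup.closure {abar, bbar} := Subgroup.zpowers_le.mpr hab
  have hcardA : Nat.card (Subgroup.zpowers abar) = p := by rw [Nat.card_zpowers, hordQ]
  have hBtop : Subgroup.closure ({abar, bbar} : Set (H ⧸ Subgroup.center H)) = ⊤ := by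
    set B := Subgroup.closure ({abar, bbar} : Set (H ⧸ Subgroup.center H)) with hBdef
    have hdvd : Nat.card B ∣ p ^ 2 := hc ▸ Subgroup.card_subgroup_dvd_card B
    have hpB : p ∣ Nat.card B := hcardA ▸ Subgroup.card_dvd_of_le hAB
    obtain ⟨k, hk2, hkB⟩ := (Nat.dvd_prime_pow hp).mp hdvd
    interval_cases k
    · rw [pow_zero] at hkB
      rw [hkB] at hpB
      exact absurd (Nat.eq_one_of_dvd_one hpB) hp.ne_one
    · rw [pow_one] at hkB
      have hAeqB : Subgroup.zpowers abar = B :=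
        Subgroup.eq_of_le_of_card_ge hAB (le_of_eq (hkB.trans hcardA.symm))
      exact absurd (hAeqB ▸ hbb) hbbar
    · exact Subgroup.eq_top_of_card_eq B (by rw [hkB, hc])
  obtain ⟨a, ha⟩ := QuotientGroup.mk_surjective abar
  obtain ⟨b, hb⟩ := QuotientGroup.mk_surjective bbar
  set c := ⁅a, b⁆ with hcdef
  set C := Subgroup.closure ({c} : Set H) with hCdef
  have hcC : c ∈ C := Subgroup.subset_closure rfl
  -- decomposition of arbitrary elements
  have hdecomp : ∀ x : H, ∃ y ∈ Subgroup.closure ({a, b} : Set H),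
      x * y⁻¹ ∈ Subgroup.center H := by
    intro x
    have hx : (x : H ⧸ Subgroup.center H) ∈
        Subgroup.map (QuotientGroup.mk' (Subgroup.center H)) (Subgroup.closure {a, b}) := by
      rw [MonoidHom.map_closure]
      have himg : (QuotientGroup.mk' (Subgroup.center H)) '' {a, b} = {abar, bbar} := by
        rw [Set.image_insert_eq, Set.image_singleton]
        simp only [QuotientGroup.mk'_apply, ha, hb]
      rw [himg, hBtop]
      exact Subgroup.mem_top _
    obtain ⟨y, hy, hyx⟩ := hx
    refine ⟨y, hy, ?_⟩
    rw [← QuotientGroup.eq_one_iff]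
    have : (y : H ⧸ Subgroup.center H) = (x : H ⧸ Subgroup.center H) := hyx
    simp [this]
  -- helper: a hom into C on center, a and b is into C everywhere
  have hsub : ∀ f : H →* H, (∀ z ∈ Subgroup.center H, f z ∈ C) → f a ∈ C → f b ∈ C →
      ∀ x, f x ∈ C := by
    intro f hz haf hbf x
    have hcl : Subgroup.closure ({a, b} : Set H) ≤ C.comap f := by
      rw [Subgroup.closure_le]
      rintro t ht
      rcases ht with rfl | ht
      · exact haf
      · rw [Set.mem_singleton_iff] at ht; subst ht; exact hbf
    obtain ⟨y, hy, hzy⟩ := hdecomp x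
    have hfx : f x = f (x * y⁻¹) * f y := by rw [← map_mul, inv_mul_cancel_right]
    rw [hfx]
    exact C.mul_mem (hz _ hzy) (hcl hy)
  have hzero : ∀ z ∈ Subgroup.center H, ∀ w : H, ⁅z, w⁆ = 1 ∧ ⁅w, z⁆ = 1 := by
    intro z hz w
    constructor
    · exact commutatorElement_eq_one_iff_commute.mpr ((Subgroup.mem_center_iff.mp hz w).symm)
    · exact commutatorElement_eq_one_iff_commute.mpr (Subgroup.mem_center_iff.mp hz w)
  have hRa : ∀ x : H, ⁅x, a⁆ ∈ C := by
    refine hsub (rightComm hcent a) (fun z hz => ?_) ?_ ?_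
    · show ⁅z, a⁆ ∈ C
      rw [(hzero z hz a).1]; exact C.one_mem
    · show ⁅a, a⁆ ∈ C
      rw [commutatorElement_eq_one_iff_commute.mpr (Commute.refl a)]; exact C.one_mem
    · show ⁅b, a⁆ ∈ C
      rw [← commutatorElement_inv]
      exact C.inv_mem hcC
  have hRb : ∀ x : H, ⁅x, b⁆ ∈ C := by
    refine hsub (rightComm hcent b) (fun z hz => ?_) ?_ ?_
    · show ⁅z, b⁆ ∈ C
      rw [(hzero z hz b).1]; exact C.one_mem
    · exact hcC
    · show ⁅b, b⁆ ∈ C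
      rw [commutatorElement_eq_one_iff_commute.mpr (Commute.refl b)]; exact C.one_mem
  have hmain : ∀ g h : H, ⁅g, h⁆ ∈ C := by
    intro g
    refine hsub (leftComm hcent g) (fun z hz => ?_) (hRa g) (hRb g)
    show ⁅g, z⁆ ∈ C
    rw [(hzero z hz g).2]; exact C.one_mem
  have hle : commutator H ≤ C := by
    rw [commutator_def, Subgroup.commutator_le]
    exact fun g _ h _ => hmain g h
  have hcp : c ^ p = 1 := by
    rw [hcdef, ← comm_central_pow (hcent a b) p]
    exact commutatorElement_eq_one_iff_commute.mpr
      (Subgroup.mem_center_iff.mp (hpow b) a)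
  calc Nat.card (commutator H) ≤ Nat.card C := Subgroup.card_le_of_le hle
    _ = orderOf c := by rw [hCdef, ← Subgroup.zpowers_eq_closure, Nat.card_zpowers]
    _ ≤ p := Nat.le_of_dvd hp.pos (orderOf_dvd_of_pow_eq_one hcp)
end
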